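/- arXiv:2107.04629 — 6 statements merged into one kernel-verified Lean document; each statement's English description precedes it below -/
import Mathlib

section
/- For every ε > 0 there exists t₀ such that for every t ≥ t₀ there exists n₀ such that for every n ≥ n₀ the following holds. There exist a graph collection 𝒢 = (G₁, …, G_{t²}) on the vertex set [n] and a bijection φ: E(K_{t,t}) → [t²] such that δ(𝒢) ≥ (1 − ε)n, yet there is no injective embedding ψ of V(K_{t,t}) into [n] such that for each edge e ∈ E(K_{t,t}) the image ψ(e) is an edge of G_{φ(e)}. -/
open SimpleGraph

/-- The degree of a vertex `v` in a graph `G`. -/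
noncomputable def deg {V : Type*} (G : SimpleGraph V) (v : V) : ℕ :=
  (G.neighborSet v).ncard


def badGraph (k g h n : ℕ) : SimpleGraph (Fin n) where
  Adj u v := u ≠ v ∧ ¬(u.val % k = g ∧ v.val % k = h) ∧ ¬(u.val % k = h ∧ v.val % k = g)
  symm := ⟨fun u v ⟨h1, h2, h3⟩ => ⟨h1.symm, fun ⟨p, q⟩ => h3 ⟨q, p⟩, fun ⟨p, q⟩ => h2 ⟨q, p⟩⟩⟩
  loopless := ⟨fun u ⟨h1, _⟩ => h1 rfl⟩

noncomputable def graphFor (n k t : ℕ) (dec : Fin t → (Fin k → Fin k)) (i j : Fin t) :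
    SimpleGraph (Fin n) :=
  if hi : i.val < k then badGraph k ((dec j) ⟨i.val, hi⟩).val i.val n else badGraph k k k n

lemma graphFor_is_bad (n k t : ℕ) (dec : Fin t → (Fin k → Fin k)) (i j : Fin t) :
    ∃ g h : ℕ, graphFor n k t dec i j = badGraph k g h n := by
  unfold graphFor
  split <;> exact ⟨_, _, rfl⟩

lemma graphFor_eval (n k t : ℕ) (dec : Fin t → (Fin k → Fin k)) (i j : Fin t)
    (hi : i.val < k) :
    graphFor n k t dec i j = badGraph k ((dec j) ⟨i.val, hi⟩).val i.val n := dif_pos hi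

def pairFn (t : ℕ) (ht : 0 < t) : Sym2 (Fin t ⊕ Fin t) → Fin t × Fin t :=
  Sym2.lift ⟨fun a b => match a, b with
    | .inl i, .inr j => (i, j)
    | .inr j, .inl i => (i, j)
    | _, _ => (⟨0, ht⟩, ⟨0, ht⟩),
    by intro a b; rcases a with i | i <;> rcases b with j | j <;> rfl⟩

def edgeEquiv (t : ℕ) (ht : 0 < t) :
    (completeBipartiteGraph (Fin t) (Fin t)).edgeSet ≃ Fin t × Fin t where
  toFun e := pairFn t ht e.val
  invFun q := ⟨s(.inl q.1, .inr q.2), by simp⟩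
  left_inv := by
    rintro ⟨z, hz⟩
    induction z using Sym2.ind with
    | _ a b =>
      rw [SimpleGraph.mem_edgeSet] at hz
      rcases a with i | i <;> rcases b with j | j
      · simp [completeBipartiteGraph] at hz
      · apply Subtype.ext
        simp only [pairFn, Sym2.lift_mk]
      · apply Subtype.ext
        simp only [pairFn, Sym2.lift_mk]
        exact Sym2.eq_swap
      · simp [completeBipartiteGraph] at hz
  right_inv := by
    rintro ⟨i, j⟩
    simp only [pairFn, Sym2.lift_mk]

lemma count_mod_le (n k c : ℕ) :
    (Finset.univ.filter fun w : Fin n => w.val % k = c).card ≤ n / k + 1 := by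
  classical
  calc (Finset.univ.filter fun w : Fin n => w.val % k = c).card
      ≤ (Finset.range (n / k + 1)).card := by
        apply Finset.card_le_card_of_injOn (fun w => w.val / k)
        · intro w hw
          simp only [Finset.mem_coe, Finset.mem_range]
          exact lt_of_le_of_lt (Nat.div_le_div_right w.isLt.le) (Nat.lt_succ_self _)
        · intro w1 h1 w2 h2 heq
          simp only [Finset.mem_coe, Finset.mem_filter] at h1 h2
          apply Fin.ext
          have heq' : w1.val / k = w2.val / k := heq
          have m1 : w1.val % k = c := h1.2
          have m2 : w2.val % k = c := h2.2
          rw [← Nat.div_add_mod w1.val k, ← Nat.div_add_mod w2.val k, heq', m1, m2]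
      _ = n / k + 1 := Finset.card_range _

lemma deg_badGraph_ge (n k g h : ℕ) (u : Fin n) :
    n ≤ deg (badGraph k g h n) u + (2 * (n / k + 1) + 1) := by
  classical
  have hdeg : deg (badGraph k g h n) u
      = (Finset.univ.filter fun w : Fin n => (badGraph k g h n).Adj u w).card := by
    rw [deg, Set.ncard_eq_toFinset_card']
    congr 1
    ext w
    simp [SimpleGraph.neighborSet]
    exact Set.mem_toFinset
  set P : Fin n → Prop := fun w => w ≠ u ∧ w.val % k ≠ g ∧ w.val % k ≠ h with hP
  have hsub : (Finset.univ.filter P) ⊆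
      (Finset.univ.filter fun w : Fin n => (badGraph k g h n).Adj u w) := by
    intro w hw
    simp only [Finset.mem_filter, Finset.mem_univ, true_and, hP] at hw ⊢
    exact ⟨hw.1.symm, fun ⟨_, q⟩ => hw.2.2 q, fun ⟨_, q⟩ => hw.2.1 q⟩
  have hcompl : (Finset.univ.filter fun w : Fin n => ¬ P w) ⊆
      {u} ∪ (Finset.univ.filter fun w : Fin n => w.val % k = g)
          ∪ (Finset.univ.filter fun w : Fin n => w.val % k = h) := by
    intro w hw
    simp only [Finset.mem_filter, Finset.mem_univ, true_and, hP] at hw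
    simp only [Finset.mem_union, Finset.mem_singleton, Finset.mem_filter, Finset.mem_univ,
      true_and]
    tauto
  have hcard1 : (Finset.univ.filter fun w : Fin n => ¬ P w).card ≤ 2 * (n / k + 1) + 1 := by
    calc (Finset.univ.filter fun w : Fin n => ¬ P w).card
        ≤ ({u} ∪ (Finset.univ.filter fun w : Fin n => w.val % k = g)
            ∪ (Finset.univ.filter fun w : Fin n => w.val % k = h)).card :=
          Finset.card_le_card hcompl
      _ ≤ ({u} ∪ (Finset.univ.filter fun w : Fin n => w.val % k = g)).card
            + (Finset.univ.filter fun w : Fin n => w.val % k = h).card :=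
          Finset.card_union_le _ _
      _ ≤ ({u} : Finset (Fin n)).card
            + (Finset.univ.filter fun w : Fin n => w.val % k = g).card
            + (Finset.univ.filter fun w : Fin n => w.val % k = h).card := by
          have := Finset.card_union_le ({u} : Finset (Fin n))
            (Finset.univ.filter fun w : Fin n => w.val % k = g)
          omega
      _ ≤ 1 + (n / k + 1) + (n / k + 1) := by
          have h1 := count_mod_le n k g
          have h2 := count_mod_le n k h
          simp only [Finset.card_singleton]
          omega
      _ = 2 * (n / k + 1) + 1 := by ring
  have htot : (Finset.univ.filter P).card
      + (Finset.univ.filter fun w : Fin n => ¬ P w).card = n := by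
    rw [Finset.card_filter_add_card_filter_not]
    simp
  have := Finset.card_le_card hsub
  omega

/-- For every `ε > 0`, for all large `t` and all large `n`, there are a graph collection
`𝒢 = (G_1, …, G_{t²})` on `[n]` and a bijection `φ : E(K_{t,t}) → [t²]` with `δ(𝒢) ≥ (1 - ε)n`,
such that no injective embedding `ψ` of `V(K_{t,t})` into `[n]` places the image of each edge `e`
of `K_{t,t}` inside `G_{φ(e)}`. -/
theorem no_easy_generalisation (ε : ℝ) (hε : 0 < ε) :
    ∃ t₀ : ℕ, ∀ t : ℕ, t₀ ≤ t → ∃ n₀ : ℕ, ∀ n : ℕ, n₀ ≤ n →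
      ∃ (𝒢 : Fin (t ^ 2) → SimpleGraph (Fin n))
        (φ : (completeBipartiteGraph (Fin t) (Fin t)).edgeSet → Fin (t ^ 2)),
        Function.Bijective φ ∧
        (∀ i v, (1 - ε) * n ≤ (deg (𝒢 i) v : ℝ)) ∧
        ¬ ∃ ψ : (Fin t ⊕ Fin t) → Fin n, Function.Injective ψ ∧
            ∀ e : (completeBipartiteGraph (Fin t) (Fin t)).edgeSet,
              Sym2.map ψ (e : Sym2 (Fin t ⊕ Fin t)) ∈ (𝒢 (φ e)).edgeSet := by
  classical
  set k : ℕ := ⌈3 / ε⌉₊ with hkdef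
  have hk0 : 0 < k := Nat.ceil_pos.mpr (by positivity)
  refine ⟨k ^ k + k, fun t ht => ⟨⌈9 / ε⌉₊, fun n hn => ?_⟩⟩
  have htk : k ≤ t := le_trans (Nat.le_add_left _ _) ht
  have htkk : k ^ k ≤ t := le_trans (Nat.le_add_right _ _) ht
  have ht0 : 0 < t := lt_of_lt_of_le (by positivity) ht
  have hcard : Fintype.card (Fin k → Fin k) ≤ Fintype.card (Fin t) := by
    simpa [Fintype.card_fun] using htkk
  obtain ⟨κ⟩ : Nonempty ((Fin k → Fin k) ↪ Fin t) :=
    Function.Embedding.nonempty_of_card_le hcard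
  haveI : Nonempty (Fin k → Fin k) := ⟨fun _ => ⟨0, hk0⟩⟩
  set dec : Fin t → (Fin k → Fin k) := Function.invFun κ with hdecdef
  have hdec : ∀ x, dec (κ x) = x := fun x => Function.leftInverse_invFun κ.injective x
  have hcast : t * t = t ^ 2 := (pow_two t).symm
  set E := edgeEquiv t ht0 with hE
  set Φ := E.trans (finProdFinEquiv.trans (finCongr hcast)) with hΦdef
  refine ⟨fun m => graphFor n k t dec (finProdFinEquiv.symm ((finCongr hcast).symm m)).1
      (finProdFinEquiv.symm ((finCongr hcast).symm m)).2, Φ, Φ.bijective, ?_, ?_⟩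
  · -- degree condition
    intro m v
    obtain ⟨g, h, hgh⟩ := graphFor_is_bad n k t dec
      (finProdFinEquiv.symm ((finCongr hcast).symm m)).1
      (finProdFinEquiv.symm ((finCongr hcast).symm m)).2
    simp only [hgh]
    have h1 := deg_badGraph_ge n k g h v
    have hk3 : (3 : ℝ) / ε ≤ (k : ℝ) := Nat.le_ceil _
    have hkR : (0 : ℝ) < (k : ℝ) := by exact_mod_cast hk0
    have hnk : ((n / k : ℕ) : ℝ) ≤ (n : ℝ) * ε / 3 := by
      have h2 : ((n / k : ℕ) : ℝ) ≤ (n : ℝ) / (k : ℝ) := Nat.cast_div_le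
      have h3 : (n : ℝ) / (k : ℝ) ≤ (n : ℝ) * ε / 3 := by
        rw [div_le_div_iff₀ hkR (by norm_num : (0:ℝ) < 3)]
        have : (3 : ℝ) ≤ ε * k := by
          rw [div_le_iff₀ hε] at hk3
          linarith
        nlinarith [Nat.cast_nonneg (α := ℝ) n]
      linarith
    have hn9 : (9 : ℝ) / ε ≤ (n : ℝ) := by
      calc (9 : ℝ) / ε ≤ (⌈9 / ε⌉₊ : ℝ) := Nat.le_ceil _
        _ ≤ (n : ℝ) := by exact_mod_cast hn
    have hcast1 : (n : ℝ) ≤ (deg (badGraph k g h n) v : ℝ) + (2 * (((n / k : ℕ) : ℝ) + 1) + 1) := by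
      exact_mod_cast h1
    have h9 : (9 : ℝ) ≤ ε * n := by
      rw [div_le_iff₀ hε] at hn9
      linarith
    nlinarith [hcast1, hnk]
  · -- no transversal embedding
    rintro ⟨ψ, -, hψ⟩
    set u : Fin k → Fin k :=
      fun r => ⟨(ψ (.inl ⟨r.val, lt_of_lt_of_le r.isLt htk⟩)).val % k, Nat.mod_lt _ hk0⟩ with hu
    set r : Fin k := ⟨(ψ (.inr (κ u))).val % k, Nat.mod_lt _ hk0⟩ with hr
    set i : Fin t := ⟨r.val, lt_of_lt_of_le r.isLt htk⟩ with hi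
    have hmem : s(Sum.inl i, Sum.inr (κ u)) ∈
        (completeBipartiteGraph (Fin t) (Fin t)).edgeSet := by simp
    set e : (completeBipartiteGraph (Fin t) (Fin t)).edgeSet := ⟨s(.inl i, .inr (κ u)), hmem⟩
      with he
    have h := hψ e
    have hEe : E e = (i, κ u) := rfl
    have hΦe : (finProdFinEquiv.symm ((finCongr hcast).symm (Φ e))) = (i, κ u) := by
      rw [hΦdef]
      simp only [Equiv.trans_apply, Equiv.symm_apply_apply, hEe]
    simp only [] at h
    rw [hΦe] at h
    have hival : i.val < k := r.isLt
    rw [graphFor_eval n k t dec i (κ u) hival] at h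
    have hfin : (⟨i.val, hival⟩ : Fin k) = r := rfl
    rw [hfin, hdec] at h
    have h' : (badGraph k (u r).val i.val n).Adj (ψ (.inl i)) (ψ (.inr (κ u))) := by
      rw [← SimpleGraph.mem_edgeSet]
      simpa [Sym2.map_pair_eq, he] using h
    exact h'.2.1 ⟨rfl, rfl⟩
end

section
/- For all ε, α > 0 there exists n₀ such that the following holds for every n ≥ n₀, every δ > 0, and every m ≤ n/ε. Let 𝒢 = (G₁, …, G_m) be a graph collection on the vertex set [n] and suppose V ⊆ [n] is such that d_{G_i}(v, V) ≥ (δ + ε)n for every i ∈ [m] and every v ∈ [n]. Let k ∈ ℕ and let n₁, …, n_k ≥ αn be integers with n₁ + ⋯ + n_k = |V|. Then there is a partition V = V₁ ∪ ⋯ ∪ V_k such that for each i ∈ [k], |V_i| = n_i, and d_{G_j}(v, V_i) ≥ (δ + ε/2)n_i for every j ∈ [m] and every v ∈ [n]. -/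
open SimpleGraph Finset
open scoped Classical

noncomputable def degOn {V : Type*} (G : SimpleGraph V) (v : V) (U : Set V) : ℕ :=
  (G.neighborSet v ∩ U).ncard

lemma degOn_coe {n : ℕ} (G : SimpleGraph (Fin n)) (v : Fin n) (W : Finset (Fin n)) :
    degOn G v ↑W = (W.filter (fun u => G.Adj v u)).card := by
  rw [degOn, ← Set.ncard_coe_finset]
  congr 1
  ext u
  simp [SimpleGraph.mem_neighborSet, and_comm]

lemma count_card_inter_le {n : ℕ} (W D : Finset (Fin n)) (s t : ℕ) :
    (((W.powersetCard s)).filter (fun S => (S ∩ D).card = t)).card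
      ≤ D.card.choose t * (W \ D).card.choose (s - t) := by
  rw [← Finset.card_powersetCard t D, ← Finset.card_powersetCard (s - t) (W \ D),
    ← Finset.card_product]
  apply Finset.card_le_card_of_injOn (fun S => (S ∩ D, S \ D))
  · intro S hS
    simp only [Finset.mem_coe, Finset.mem_filter, Finset.mem_powersetCard] at hS
    obtain ⟨⟨hSW, hcard⟩, hst⟩ := hS
    simp only [Finset.mem_coe, Finset.mem_product, Finset.mem_powersetCard]
    have h1 := Finset.card_inter_add_card_sdiff S D
    refine ⟨⟨Finset.inter_subset_right, hst⟩, Finset.sdiff_subset_sdiff hSW le_rfl, by omega⟩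
  · intro S hS S' hS' h
    simp only [Prod.mk.injEq] at h
    calc S = S \ D ∪ S ∩ D := (Finset.sdiff_union_inter S D).symm
      _ = S' \ D ∪ S' ∩ D := by rw [h.1, h.2]
      _ = S' := Finset.sdiff_union_inter S' D

lemma chain_step (d e s q t : ℕ) (hts : t < s)
    (hpos : 0 < (d - t) * (s - t))
    (H : (q + 1) * ((t + 1) * (e - (s - (t + 1)))) ≤ q * ((d - t) * (s - t))) :
    (q + 1) * (d.choose t * e.choose (s - t))
      ≤ q * (d.choose (t + 1) * e.choose (s - (t + 1))) := by
  have h1 : d.choose (t + 1) * (t + 1) = d.choose t * (d - t) := Nat.choose_succ_right_eq d t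
  have hst : (s - (t + 1)) + 1 = s - t := by omega
  have h2 : e.choose (s - t) * (s - t) = e.choose (s - (t + 1)) * (e - (s - (t + 1))) := by
    have := Nat.choose_succ_right_eq e (s - (t + 1))
    rwa [hst] at this
  have key : (d.choose t * e.choose (s - t)) * ((d - t) * (s - t))
      = (d.choose (t + 1) * e.choose (s - (t + 1))) * ((t + 1) * (e - (s - (t + 1)))) := by
    calc (d.choose t * e.choose (s - t)) * ((d - t) * (s - t))
        = (d.choose t * (d - t)) * (e.choose (s - t) * (s - t)) := by ring
      _ = (d.choose (t + 1) * (t + 1)) * (e.choose (s - (t + 1)) * (e - (s - (t + 1)))) := by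
          rw [← h1, h2]
      _ = (d.choose (t + 1) * e.choose (s - (t + 1))) * ((t + 1) * (e - (s - (t + 1)))) := by ring
  have h3 : ((q + 1) * (d.choose t * e.choose (s - t))) * ((d - t) * (s - t))
      ≤ (q * (d.choose (t + 1) * e.choose (s - (t + 1)))) * ((d - t) * (s - t)) := by
    calc ((q + 1) * (d.choose t * e.choose (s - t))) * ((d - t) * (s - t))
        = (d.choose (t + 1) * e.choose (s - (t + 1))) * ((q + 1) * ((t + 1) * (e - (s - (t + 1))))) := by
          calc ((q + 1) * (d.choose t * e.choose (s - t))) * ((d - t) * (s - t))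
              = (q+1) * ((d.choose t * e.choose (s - t)) * ((d - t) * (s - t))) := by ring
            _ = (q+1) * ((d.choose (t + 1) * e.choose (s - (t + 1))) * ((t + 1) * (e - (s - (t + 1))))) := by rw [key]
            _ = (d.choose (t + 1) * e.choose (s - (t + 1))) * ((q + 1) * ((t + 1) * (e - (s - (t + 1))))) := by ring
      _ ≤ (d.choose (t + 1) * e.choose (s - (t + 1))) * (q * ((d - t) * (s - t))) :=
          Nat.mul_le_mul_left _ H
      _ = (q * (d.choose (t + 1) * e.choose (s - (t + 1)))) * ((d - t) * (s - t)) := by ring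
  exact Nat.le_of_mul_le_mul_right h3 hpos

lemma chain (d e s q θ' : ℕ)
    (H : ∀ t, t + 1 ≤ θ' → t < s ∧ 0 < (d - t) * (s - t) ∧
      (q + 1) * ((t + 1) * (e - (s - (t + 1)))) ≤ q * ((d - t) * (s - t))) :
    ∀ j t, t + j = θ' →
      (q + 1) ^ j * (d.choose t * e.choose (s - t)) ≤ q ^ j * (d.choose θ' * e.choose (s - θ')) := by
  intro j
  induction j with
  | zero =>
    intro t ht
    have : t = θ' := by omega
    subst this
    simp
  | succ j ih =>
    intro t ht
    obtain ⟨h1, h2, h3⟩ := H t (by omega)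
    have hstep := chain_step d e s q t h1 h2 h3
    have hrec := ih (t + 1) (by omega)
    calc (q + 1) ^ (j + 1) * (d.choose t * e.choose (s - t))
        = (q + 1) ^ j * ((q + 1) * (d.choose t * e.choose (s - t))) := by ring
      _ ≤ (q + 1) ^ j * (q * (d.choose (t + 1) * e.choose (s - (t + 1)))) :=
          Nat.mul_le_mul_left _ hstep
      _ = q * ((q + 1) ^ j * (d.choose (t + 1) * e.choose (s - (t + 1)))) := by ring
      _ ≤ q * (q ^ j * (d.choose θ' * e.choose (s - θ'))) := Nat.mul_le_mul_left _ hrec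
      _ = q ^ (j + 1) * (d.choose θ' * e.choose (s - θ')) := by ring

lemma tail_bound {n : ℕ} (W D : Finset (Fin n)) (hD : D ⊆ W) (s q θ g : ℕ)
    (hθs : θ + g ≤ s)
    (H : ∀ t, t + 1 ≤ θ + g → t < s ∧ 0 < (D.card - t) * (s - t) ∧
      (q + 1) * ((t + 1) * ((W \ D).card - (s - (t + 1)))) ≤ q * ((D.card - t) * (s - t))) :
    (((W.powersetCard s).filter (fun S => (S ∩ D).card ≤ θ)).card : ℝ)
      ≤ (θ + 1) * ((q : ℝ) / (q + 1)) ^ g * (W.card.choose s) := by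
  set d := D.card with hd
  set e := (W \ D).card with he
  set θ' := θ + g with hθ'
  have hde : d + e = W.card := by
    rw [hd, he, Finset.card_sdiff_of_subset hD]
    have := Finset.card_le_card hD
    omega
  -- the top term is at most the binomial coefficient
  have htop : d.choose θ' * e.choose (s - θ') ≤ W.card.choose s := by
    rw [← hde, Nat.add_choose_eq]
    have hmem : ((θ', s - θ') : ℕ × ℕ) ∈ Finset.HasAntidiagonal.antidiagonal s :=
      Finset.HasAntidiagonal.mem_antidiagonal.2 (by omega)
    exact Finset.single_le_sum (f := fun ij : ℕ × ℕ => d.choose ij.1 * e.choose ij.2)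
      (fun _ _ => Nat.zero_le _) hmem
  -- each small term is exponentially smaller
  have hterm : ∀ t ≤ θ, ((d.choose t * e.choose (s - t) : ℕ) : ℝ)
      ≤ ((q : ℝ) / (q + 1)) ^ g * (W.card.choose s) := by
    intro t ht
    have hchain := chain d e s q θ' H (θ' - t) t (by omega)
    have hq1 : (0 : ℝ) < ((q : ℝ) + 1) ^ (θ' - t) := by positivity
    have hcast : ((q : ℝ) + 1) ^ (θ' - t) * (d.choose t * e.choose (s - t))
        ≤ (q : ℝ) ^ (θ' - t) * (d.choose θ' * e.choose (s - θ')) := by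
      have := (Nat.cast_le (α := ℝ)).2 hchain
      push_cast at this
      convert this using 2 <;> push_cast <;> ring
    have hρ : ((d.choose t * e.choose (s - t) : ℕ) : ℝ)
        ≤ ((q : ℝ) / (q + 1)) ^ (θ' - t) * (d.choose θ' * e.choose (s - θ')) := by
      rw [div_pow, div_mul_eq_mul_div, le_div_iff₀ hq1]
      push_cast
      calc ((d.choose t : ℝ) * e.choose (s - t)) * ((q : ℝ) + 1) ^ (θ' - t)
            = ((q : ℝ) + 1) ^ (θ' - t) * ((d.choose t : ℝ) * e.choose (s - t)) := by ring
          _ ≤ (q : ℝ) ^ (θ' - t) * ((d.choose θ' : ℝ) * e.choose (s - θ')) := hcast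
    refine hρ.trans ?_
    have hρ1 : ((q : ℝ) / (q + 1)) ≤ 1 := by
      rw [div_le_one (by positivity)]; linarith
    have hρ0 : (0 : ℝ) ≤ (q : ℝ) / (q + 1) := by positivity
    have hmono : ((q : ℝ) / (q + 1)) ^ (θ' - t) ≤ ((q : ℝ) / (q + 1)) ^ g :=
      pow_le_pow_of_le_one hρ0 hρ1 (by omega)
    have htop' : ((d.choose θ' * e.choose (s - θ') : ℕ) : ℝ) ≤ (W.card.choose s : ℝ) :=
      (Nat.cast_le).2 htop
    push_cast at htop' ⊢
    have h0 : (0:ℝ) ≤ (d.choose θ' : ℝ) * e.choose (s - θ') := by positivity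
    calc ((q : ℝ) / (q + 1)) ^ (θ' - t) * ((d.choose θ' : ℝ) * e.choose (s - θ'))
        ≤ ((q : ℝ) / (q + 1)) ^ g * ((d.choose θ' : ℝ) * e.choose (s - θ')) :=
          mul_le_mul_of_nonneg_right hmono h0
      _ ≤ ((q : ℝ) / (q + 1)) ^ g * (W.card.choose s : ℝ) :=
          mul_le_mul_of_nonneg_left htop' (by positivity)
  -- union over the small values of the intersection
  have hsub : (W.powersetCard s).filter (fun S => (S ∩ D).card ≤ θ)
      ⊆ (Finset.range (θ + 1)).biUnion
        (fun t => (W.powersetCard s).filter (fun S => (S ∩ D).card = t)) := by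
    intro S hS
    simp only [Finset.mem_filter] at hS
    exact Finset.mem_biUnion.2 ⟨(S ∩ D).card, Finset.mem_range.2 (by omega),
      Finset.mem_filter.2 ⟨hS.1, rfl⟩⟩
  have hcard : (((W.powersetCard s).filter (fun S => (S ∩ D).card ≤ θ)).card : ℝ)
      ≤ ∑ t ∈ Finset.range (θ + 1), ((d.choose t * e.choose (s - t) : ℕ) : ℝ) := by
    have h1 := (Finset.card_le_card hsub).trans (Finset.card_biUnion_le)
    have h2 : ∑ t ∈ Finset.range (θ + 1),
        ((W.powersetCard s).filter (fun S => (S ∩ D).card = t)).card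
        ≤ ∑ t ∈ Finset.range (θ + 1), d.choose t * e.choose (s - t) :=
      Finset.sum_le_sum (fun t _ => count_card_inter_le W D s t)
    exact_mod_cast (h1.trans h2)
  refine hcard.trans ?_
  calc ∑ t ∈ Finset.range (θ + 1), ((d.choose t * e.choose (s - t) : ℕ) : ℝ)
      ≤ ∑ _t ∈ Finset.range (θ + 1), ((q : ℝ) / (q + 1)) ^ g * (W.card.choose s) :=
        Finset.sum_le_sum (fun t ht => hterm t (Nat.lt_succ_iff.1 (Finset.mem_range.1 ht)))
    _ = (θ + 1) * (((q : ℝ) / (q + 1)) ^ g * (W.card.choose s)) := by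
        rw [Finset.sum_const, Finset.card_range]; push_cast; ring
    _ = (θ + 1) * ((q : ℝ) / (q + 1)) ^ g * (W.card.choose s) := by ring

set_option maxHeartbeats 1000000 in
lemma Harith {w d e s t q : ℕ} {β η : ℝ}
    (hβ1 : β ≤ 1) (hηβ : η ≤ β) (hη : 0 < η)
    (hde : d + e = w) (hd : β * w ≤ d) (hsw : s ≤ w)
    (hηs : 16 ≤ η * s) (hq : 4 ≤ η * q)
    (ht : (t : ℝ) ≤ (β - η / 2) * s) :
    t < s ∧ 0 < (d - t) * (s - t) ∧
      (q + 1) * ((t + 1) * (e - (s - (t + 1)))) ≤ q * ((d - t) * (s - t)) := by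
  have hs0 : (0:ℝ) < s := by nlinarith
  have hw0 : (0:ℝ) < w := by
    have : (s:ℝ) ≤ w := by exact_mod_cast hsw
    linarith
  have hq0 : (0:ℝ) < q := by nlinarith
  have hβ0 : 0 < β := lt_of_lt_of_le hη hηβ
  -- t + 8 ≤ s (since (η/2) s ≥ 8)
  have hts : (t:ℝ) + 8 ≤ s := by nlinarith
  have htsN : t < s := by
    have : (t:ℝ) < s := by linarith
    exact_mod_cast this
  -- t + 8 ≤ d
  have hswR : (s:ℝ) ≤ w := by exact_mod_cast hsw
  have htd : (t:ℝ) + 8 ≤ d := by nlinarith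
  have htdN : t < d := by
    have : (t:ℝ) < d := by linarith
    exact_mod_cast this
  refine ⟨htsN, Nat.mul_pos (by omega) (by omega), ?_⟩
  -- now the main inequality; handle truncated subtraction in `e - (s - (t+1))`
  by_cases hcase : e + (t + 1) < s
  · have : e - (s - (t + 1)) = 0 := by omega
    rw [this]
    simp
  · push_neg at hcase
    -- cast everything
    rw [← Nat.cast_le (α := ℝ)]
    push_cast [Nat.cast_sub htsN.le, Nat.cast_sub htdN.le,
      Nat.cast_sub (by omega : s - (t+1) ≤ e), Nat.cast_sub (by omega : t + 1 ≤ s)]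
    have heR : (e:ℝ) = w - d := by
      have : (d:ℝ) + e = w := by exact_mod_cast hde
      linarith
    rw [heR]
    set T := (t:ℝ)
    set S := (s:ℝ)
    set Wr := (w:ℝ)
    set Dr := (d:ℝ)
    set Q := (q:ℝ)
    -- key expansion: Δ = DS - TW - W + D + S - 2T - 1
    have hdelta : (Dr - T) * (S - T) - (T + 1) * ((Wr - Dr) - (S - (T+1)))
        = Dr * S - T * Wr - Wr + Dr + S - 2 * T - 1 := by ring
    have hT0 : (0:ℝ) ≤ T := Nat.cast_nonneg t
    have hD0 : (0:ℝ) ≤ Dr := Nat.cast_nonneg d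
    have hTW : T ≤ Wr := by
      have : (t:ℝ) ≤ s := by linarith
      linarith
    -- DS - TW ≥ (η/2) S W
    have h1 : (η / 2) * S * Wr ≤ Dr * S - T * Wr := by nlinarith
    -- Δ ≥ (η/4) S W
    have h2 : (η / 4) * S * Wr ≤ (Dr - T) * (S - T) - (T + 1) * ((Wr - Dr) - (S - (T+1))) := by
      rw [hdelta]
      nlinarith
    -- X ≤ S W  (when X ≥ 0); conclude
    have hX : (T + 1) * ((Wr - Dr) - (S - (T+1))) ≤ S * Wr := by
      have hf1 : T + 1 ≤ S := by linarith
      have hf2 : (Wr - Dr) - (S - (T+1)) ≤ Wr := by linarith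
      by_cases hXpos : 0 ≤ (Wr - Dr) - (S - (T+1))
      · calc (T + 1) * ((Wr - Dr) - (S - (T+1))) ≤ S * ((Wr - Dr) - (S - (T+1))) :=
            mul_le_mul_of_nonneg_right hf1 hXpos
          _ ≤ S * Wr := mul_le_mul_of_nonneg_left hf2 hs0.le
      · push_neg at hXpos
        nlinarith
    -- Q Δ ≥ (Qη/4) S W ≥ S W ≥ X, hence (Q+1) X ≤ Q (D-T)(S-T)
    have h3 : S * Wr ≤ Q * ((η/4) * S * Wr) := by
      have h4 : 4 * (S * Wr) ≤ (η * Q) * (S * Wr) :=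
        mul_le_mul_of_nonneg_right hq (by positivity)
      linarith
    have hQD : Q * ((η/4) * S * Wr)
        ≤ Q * ((Dr - T) * (S - T) - (T + 1) * ((Wr - Dr) - (S - (T+1)))) :=
      mul_le_mul_of_nonneg_left h2 hq0.le
    linarith [hX, h3, hQD]

set_option maxHeartbeats 1600000 in
lemma step {n m : ℕ} (𝒢 : Fin m → SimpleGraph (Fin n)) (W : Finset (Fin n)) (s : ℕ)
    (α β η : ℝ) (q G : ℕ)
    (hη : 0 < η) (hα : 0 < α)
    (hβ1 : Fin m → β ≤ 1) (hηβ : η ≤ β)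
    (hq : 4 ≤ η * q) (hq0 : 0 < q)
    (hαs : α * n ≤ s) (hαws : α * n ≤ (((W.card - s : ℕ)) : ℝ))
    (hsw : s ≤ W.card)
    (hn16 : 16 ≤ η * (α * n))
    (hGle : (G : ℝ) ≤ (η / 2) * (α * n))
    (hbig : (2 * m * n * (n + 1) : ℝ) * ((q : ℝ) / (q + 1)) ^ G < 1)
    (hdeg : ∀ j v, β * W.card ≤ ((W.filter (fun u => (𝒢 j).Adj v u)).card : ℝ)) :
    ∃ S : Finset (Fin n), S ⊆ W ∧ S.card = s ∧
      ∀ (j : Fin m) (v : Fin n),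
        (β - η) * s < ((S.filter (fun u => (𝒢 j).Adj v u)).card : ℝ) ∧
        (β - η) * (((W \ S).card : ℕ) : ℝ)
          < (((W \ S).filter (fun u => (𝒢 j).Adj v u)).card : ℝ) := by
  classical
  set w := W.card with hw
  have hwn : w ≤ n := by
    calc w ≤ (Finset.univ : Finset (Fin n)).card := Finset.card_le_univ W
      _ = n := by simp
  set Dv : Fin m → Fin n → Finset (Fin n) :=
    fun j v => W.filter (fun u => (𝒢 j).Adj v u) with hDv
  have hβη0 : 0 ≤ β - η := by linarith
  -- generic tail fact, applied to both s and w - s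
  have tailfact : ∀ s' : ℕ, α * n ≤ s' → s' ≤ w → ∀ (j : Fin m) (v : Fin n),
      (((W.powersetCard s').filter
          (fun S => (S ∩ Dv j v).card ≤ ⌊(β - η) * s'⌋₊)).card : ℝ)
        ≤ (n + 1) * ((q : ℝ) / (q + 1)) ^ G * (w.choose s') := by
    intro s' hαs' hs'w j v
    have hβ1' : β ≤ 1 := hβ1 j
    have hs16 : (16 : ℝ) ≤ η * s' := by
      calc (16 : ℝ) ≤ η * (α * n) := hn16
        _ ≤ η * s' := by nlinarith
    have hs'0R : (0 : ℝ) < s' := by nlinarith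
    set D := Dv j v with hD
    have hDW : D ⊆ W := Finset.filter_subset _ _
    have hdW : D.card ≤ w := Finset.card_le_card hDW
    have hde : D.card + (W \ D).card = w := by
      rw [Finset.card_sdiff_of_subset hDW]; omega
    set θ := ⌊(β - η) * s'⌋₊ with hθ
    set g := ⌈(η / 2) * (s' : ℝ)⌉₊ with hg
    -- real bounds on θ and g
    have hθle : (θ : ℝ) ≤ (β - η) * s' := Nat.floor_le (by positivity)
    have hgle : (g : ℝ) < (η / 2) * s' + 1 := Nat.ceil_lt_add_one (by positivity)
    have hθg : θ + g ≤ s' := by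
      have h1 : (θ : ℝ) + g < (β - η / 2) * s' + 1 := by linarith
      have h2 : (β - η / 2) * s' + 1 ≤ (s' : ℝ) := by nlinarith
      have : ((θ + g : ℕ) : ℝ) < (s' : ℝ) := by push_cast; linarith
      exact_mod_cast this.le
    have hH : ∀ t, t + 1 ≤ θ + g → t < s' ∧ 0 < (D.card - t) * (s' - t) ∧
        (q + 1) * ((t + 1) * ((W \ D).card - (s' - (t + 1)))) ≤ q * ((D.card - t) * (s' - t)) := by
      intro t ht
      have htR : (t : ℝ) ≤ (β - η / 2) * s' := by
        have h1 : (t : ℝ) ≤ (θ : ℝ) + g - 1 := by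
          have : ((t : ℕ) : ℝ) + 1 ≤ ((θ + g : ℕ) : ℝ) := by exact_mod_cast ht
          push_cast at this; linarith
        linarith
      exact Harith hβ1' hηβ hη hde (le_trans (by nlinarith) (hdeg j v)) hs'w
        (by exact_mod_cast hs16) hq htR
    have htb := tail_bound W D hDW s' q θ g hθg hH
    refine htb.trans ?_
    have hθn : (θ : ℝ) + 1 ≤ (n : ℝ) + 1 := by
      have : (θ : ℝ) ≤ s' := by nlinarith
      have h2 : (s' : ℝ) ≤ n := by
        have : (s' : ℕ) ≤ n := le_trans hs'w hwn
        exact_mod_cast this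
      linarith
    have hGg : G ≤ g := by
      have h1 : (G : ℝ) ≤ (η / 2) * s' := by nlinarith
      have h2 : ((η : ℝ) / 2) * s' ≤ g := Nat.le_ceil _
      exact_mod_cast h1.trans h2
    have hρ0 : (0 : ℝ) ≤ (q : ℝ) / (q + 1) := by positivity
    have hρ1 : ((q : ℝ) / (q + 1)) ≤ 1 := by
      rw [div_le_one (by positivity)]; linarith
    have hmono : ((q : ℝ) / (q + 1)) ^ g ≤ ((q : ℝ) / (q + 1)) ^ G :=
      pow_le_pow_of_le_one hρ0 hρ1 hGg
    have hc0 : (0 : ℝ) ≤ (w.choose s' : ℝ) := by positivity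
    calc ((θ : ℝ) + 1) * ((q : ℝ) / (q + 1)) ^ g * (w.choose s')
        ≤ ((n : ℝ) + 1) * ((q : ℝ) / (q + 1)) ^ g * (w.choose s') := by
          apply mul_le_mul_of_nonneg_right _ hc0
          exact mul_le_mul_of_nonneg_right hθn (by positivity)
      _ ≤ ((n : ℝ) + 1) * ((q : ℝ) / (q + 1)) ^ G * (w.choose s') := by
          apply mul_le_mul_of_nonneg_right _ hc0
          exact mul_le_mul_of_nonneg_left hmono (by positivity)
  -- thresholds
  set θl := ⌊(β - η) * s⌋₊ with hθl
  set θh := ⌊(β - η) * (((w - s : ℕ)) : ℝ)⌋₊ with hθh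
  set T := W.powersetCard s with hT
  have hTcard : T.card = w.choose s := Finset.card_powersetCard s W
  have hC0 : 0 < w.choose s := Nat.choose_pos hsw
  -- the bad sets
  set Bad := T.filter (fun S => ¬ (∀ (j : Fin m) (v : Fin n),
      θl < (S ∩ Dv j v).card ∧ θh < ((W \ S) ∩ Dv j v).card)) with hBad
  have hBsub : Bad ⊆ (Finset.univ : Finset (Fin m × Fin n)).biUnion (fun p =>
      (T.filter (fun S => (S ∩ Dv p.1 p.2).card ≤ θl)) ∪
      (T.filter (fun S => ((W \ S) ∩ Dv p.1 p.2).card ≤ θh))) := by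
    intro S hS
    simp only [hBad, Finset.mem_filter] at hS
    obtain ⟨hST, hbad⟩ := hS
    simp only [not_forall] at hbad
    obtain ⟨j, v, hjv⟩ := hbad
    refine Finset.mem_biUnion.2 ⟨(j, v), Finset.mem_univ _, ?_⟩
    rcases (not_and_or.1 hjv) with h | h
    · exact Finset.mem_union_left _ (Finset.mem_filter.2 ⟨hST, by simpa using not_lt.1 h⟩)
    · exact Finset.mem_union_right _ (Finset.mem_filter.2 ⟨hST, by simpa using not_lt.1 h⟩)
  -- bound on the complement-tail bad set via injection S ↦ W \ S
  have hhigh : ∀ (j : Fin m) (v : Fin n),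
      ((T.filter (fun S => ((W \ S) ∩ Dv j v).card ≤ θh)).card : ℝ)
        ≤ (n + 1) * ((q : ℝ) / (q + 1)) ^ G * (w.choose s) := by
    intro j v
    have hinj : (T.filter (fun S => ((W \ S) ∩ Dv j v).card ≤ θh)).card
        ≤ ((W.powersetCard (w - s)).filter (fun S' => (S' ∩ Dv j v).card ≤ θh)).card := by
      apply Finset.card_le_card_of_injOn (fun S => W \ S)
      · intro S hS
        simp only [Finset.mem_coe, Finset.mem_filter, hT, Finset.mem_powersetCard] at hS ⊢
        obtain ⟨⟨hSW, hScard⟩, hh⟩ := hS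
        exact ⟨⟨Finset.sdiff_subset, by rw [Finset.card_sdiff_of_subset hSW, hScard]⟩, hh⟩
      · intro S hS S' hS' hEq
        simp only [Finset.coe_filter, Set.mem_setOf_eq, hT, Finset.mem_powersetCard] at hS hS'
        have h1 : W \ (W \ S) = S := by
          rw [Finset.sdiff_sdiff_self_left, Finset.inter_eq_right.2 hS.1.1]
        have h2 : W \ (W \ S') = S' := by
          rw [Finset.sdiff_sdiff_self_left, Finset.inter_eq_right.2 hS'.1.1]
        have hEq' : W \ S = W \ S' := hEq
        rw [← h1, ← h2, hEq']
    have hws : (w - s : ℕ) ≤ w := by omega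
    have htf := tailfact (w - s) hαws hws j v
    have hsymm : w.choose (w - s) = w.choose s := Nat.choose_symm hsw
    rw [hsymm] at htf
    calc ((T.filter (fun S => ((W \ S) ∩ Dv j v).card ≤ θh)).card : ℝ)
        ≤ (((W.powersetCard (w - s)).filter (fun S' => (S' ∩ Dv j v).card ≤ θh)).card : ℝ) := by
          exact_mod_cast hinj
      _ ≤ (n + 1) * ((q : ℝ) / (q + 1)) ^ G * (w.choose s) := htf
  -- total bad count
  have hBcard : (Bad.card : ℝ) < (T.card : ℝ) := by
    have h1 : (Bad.card : ℕ) ≤ ∑ p ∈ (Finset.univ : Finset (Fin m × Fin n)),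
        ((T.filter (fun S => (S ∩ Dv p.1 p.2).card ≤ θl)).card +
         (T.filter (fun S => ((W \ S) ∩ Dv p.1 p.2).card ≤ θh)).card) := by
      refine le_trans (Finset.card_le_card hBsub) (le_trans Finset.card_biUnion_le ?_)
      exact Finset.sum_le_sum (fun p _ => Finset.card_union_le _ _)
    have h1' : ((Bad.card : ℕ) : ℝ) ≤ ∑ p ∈ (Finset.univ : Finset (Fin m × Fin n)),
        (((T.filter (fun S => (S ∩ Dv p.1 p.2).card ≤ θl)).card : ℝ) +
         ((T.filter (fun S => ((W \ S) ∩ Dv p.1 p.2).card ≤ θh)).card : ℝ)) := by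
      have := (Nat.cast_le (α := ℝ)).2 h1
      push_cast at this
      exact this
    have h2 : ((Bad.card : ℕ) : ℝ) ≤ ∑ p ∈ (Finset.univ : Finset (Fin m × Fin n)),
        (2 * ((n + 1) * ((q : ℝ) / (q + 1)) ^ G * (w.choose s))) := by
      refine le_trans h1' ?_
      refine Finset.sum_le_sum (fun p _ => ?_)
      push_cast
      have hl := tailfact s hαs hsw p.1 p.2
      have hh := hhigh p.1 p.2
      linarith
    have h3 : ∑ p ∈ (Finset.univ : Finset (Fin m × Fin n)),
        (2 * ((n + 1) * ((q : ℝ) / (q + 1)) ^ G * (w.choose s)))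
        = (2 * m * n * (n + 1) : ℝ) * ((q : ℝ) / (q + 1)) ^ G * (w.choose s) := by
      rw [Finset.sum_const, Finset.card_univ]
      simp only [Fintype.card_prod, Fintype.card_fin]
      rw [nsmul_eq_mul]
      push_cast
      ring
    have h4 : (2 * m * n * (n + 1) : ℝ) * ((q : ℝ) / (q + 1)) ^ G * (w.choose s)
        < 1 * (w.choose s) := by
      apply mul_lt_mul_of_pos_right hbig
      exact_mod_cast hC0
    rw [hTcard]
    push_cast
    calc ((Bad.card : ℕ) : ℝ) ≤ _ := h2
      _ = _ := h3
      _ < 1 * (w.choose s) := h4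
      _ = (w.choose s : ℝ) := by ring
  have hBlt : Bad.card < T.card := by exact_mod_cast hBcard
  -- extract a good S
  have hTB : ¬ T ⊆ Bad := fun hsub => absurd (Finset.card_le_card hsub) (not_le.2 hBlt)
  obtain ⟨S, hST, hSB⟩ := Finset.not_subset.1 hTB
  have hSgood : ∀ (j : Fin m) (v : Fin n),
      θl < (S ∩ Dv j v).card ∧ θh < ((W \ S) ∩ Dv j v).card := by
    by_contra hc
    exact hSB (Finset.mem_filter.2 ⟨hST, hc⟩)
  rw [hT, Finset.mem_powersetCard] at hST
  obtain ⟨hSW, hScard⟩ := hST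
  refine ⟨S, hSW, hScard, fun j v => ?_⟩
  obtain ⟨h1, h2⟩ := hSgood j v
  have hSfilt : S ∩ Dv j v = S.filter (fun u => (𝒢 j).Adj v u) := by
    ext u
    simp only [Finset.mem_inter, hDv, Finset.mem_filter]
    exact ⟨fun ⟨ha, _, hc⟩ => ⟨ha, hc⟩, fun ⟨ha, hb⟩ => ⟨ha, hSW ha, hb⟩⟩
  have hWSfilt : (W \ S) ∩ Dv j v = (W \ S).filter (fun u => (𝒢 j).Adj v u) := by
    ext u
    simp only [Finset.mem_inter, hDv, Finset.mem_filter, Finset.mem_sdiff]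
    tauto
  constructor
  · rw [← hSfilt]
    have hfl : (β - η) * s < (θl : ℝ) + 1 := by
      rw [hθl]; exact Nat.lt_floor_add_one _
    have : ((θl : ℕ) : ℝ) + 1 ≤ ((S ∩ Dv j v).card : ℝ) := by exact_mod_cast h1
    linarith
  · rw [← hWSfilt]
    have hcardWS : (W \ S).card = w - s := by rw [Finset.card_sdiff_of_subset hSW, hScard]
    rw [hcardWS]
    have hfl : (β - η) * (((w - s : ℕ)) : ℝ) < (θh : ℝ) + 1 := by
      rw [hθh]; exact Nat.lt_floor_add_one _
    have : ((θh : ℕ) : ℝ) + 1 ≤ (((W \ S) ∩ Dv j v).card : ℝ) := by exact_mod_cast h2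
    linarith

lemma iterate {n m : ℕ} (𝒢 : Fin m → SimpleGraph (Fin n)) (α δ ε η : ℝ) (q G : ℕ)
    (hη : 0 < η) (hα : 0 < α) (hδ : 0 < δ) (hε : 0 < ε)
    (hq : 4 ≤ η * q) (hq0 : 0 < q)
    (hn16 : 16 ≤ η * (α * n))
    (hGle : (G : ℝ) ≤ (η / 2) * (α * n))
    (hbig : (2 * m * n * (n + 1) : ℝ) * ((q : ℝ) / (q + 1)) ^ G < 1) :
    ∀ (k : ℕ) (nn : Fin k → ℕ) (W : Finset (Fin n)) (β : ℝ),
      (Fin m → β ≤ 1) →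
      (δ + ε / 2 + k * η ≤ β + η) →
      (∀ j v, β * W.card ≤ ((W.filter (fun u => (𝒢 j).Adj v u)).card : ℝ)) →
      (∀ i, α * n ≤ (nn i : ℝ)) →
      (∑ i, nn i) = W.card →
      ∃ P : Fin k → Finset (Fin n),
        (∀ i, P i ⊆ W) ∧
        (∀ i j, i ≠ j → Disjoint (P i) (P j)) ∧
        (∀ v, v ∈ W ↔ ∃ i, v ∈ P i) ∧
        (∀ i, (P i).card = nn i) ∧
        (∀ i (j : Fin m) v,
          (δ + ε / 2) * nn i ≤ (((P i).filter (fun u => (𝒢 j).Adj v u)).card : ℝ)) := by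
  intro k
  induction k with
  | zero =>
    intro nn W β _ _ _ _ hsum
    have hW : W = ∅ := Finset.card_eq_zero.1 (by simpa using hsum.symm)
    subst hW
    exact ⟨fun i => i.elim0, fun i => i.elim0, fun i => i.elim0,
      fun v => ⟨fun h => absurd h (by simp), fun ⟨i, _⟩ => i.elim0⟩,
      fun i => i.elim0, fun i => i.elim0⟩
  | succ k ih =>
    intro nn W β hβ1 hβlow hdeg hsz hsum
    rcases Nat.eq_zero_or_pos k with hk0 | hkpos
    · -- one single part: take W itself
      subst hk0
      have hcard : ∀ i : Fin 1, (nn i : ℕ) = W.card := by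
        intro i
        have h0 : i = 0 := Fin.eq_zero i
        subst h0
        simpa using hsum
      have hβge : δ + ε / 2 ≤ β := by
        have : ((0 : ℕ) + 1 : ℕ) = 1 := rfl
        push_cast at hβlow
        linarith
      refine ⟨fun _ => W, fun _ => Finset.Subset.refl W, ?_, ?_, ?_, ?_⟩
      · intro i j hij
        exact absurd ((Fin.eq_zero i).trans (Fin.eq_zero j).symm) hij
      · intro v
        exact ⟨fun h => ⟨0, h⟩, fun ⟨i, h⟩ => h⟩
      · intro i; exact (hcard i).symm
      · intro i j v
        have h1 := hdeg j v
        have h2 : (δ + ε / 2) * (nn i : ℝ) ≤ β * (nn i : ℝ) :=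
          mul_le_mul_of_nonneg_right hβge (Nat.cast_nonneg _)
        rw [hcard i] at h2 ⊢
        linarith
    · -- at least two parts: peel off the first one
      set s := nn 0 with hs
      have hsum' : s + ∑ i : Fin k, nn i.succ = W.card := by
        rw [← hsum, Fin.sum_univ_succ]
      have hsle : s ≤ W.card := by omega
      have hrest : α * n ≤ ((∑ i : Fin k, nn i.succ : ℕ) : ℝ) := by
        have i0 : Fin k := ⟨0, hkpos⟩
        have h1 : nn i0.succ ≤ ∑ i : Fin k, nn i.succ :=
          Finset.single_le_sum (f := fun i : Fin k => nn i.succ)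
            (fun _ _ => Nat.zero_le _) (Finset.mem_univ i0)
        calc α * n ≤ (nn i0.succ : ℝ) := hsz i0.succ
          _ ≤ _ := by exact_mod_cast h1
      have hαws : α * n ≤ (((W.card - s : ℕ)) : ℝ) := by
        have : (W.card - s : ℕ) = ∑ i : Fin k, nn i.succ := by omega
        rw [this]; exact hrest
      have hk1 : (1 : ℝ) ≤ (k : ℝ) := by exact_mod_cast hkpos
      have hηβ : η ≤ β := by
        push_cast at hβlow
        nlinarith
      obtain ⟨S, hSW, hScard, hSdeg⟩ := step 𝒢 W s α β η q G hη hα hβ1 hηβ hq hq0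
        (hsz 0) hαws hsle hn16 hGle hbig hdeg
      have hWScard : (W \ S).card = W.card - s := by
        rw [Finset.card_sdiff_of_subset hSW, hScard]
      have hβ1' : Fin m → β - η ≤ 1 := fun j => by have := hβ1 j; linarith
      have hβlow' : δ + ε / 2 + (k : ℝ) * η ≤ (β - η) + η := by
        push_cast at hβlow
        linarith
      have hdeg' : ∀ j v, (β - η) * (W \ S).card
          ≤ (((W \ S).filter (fun u => (𝒢 j).Adj v u)).card : ℝ) :=
        fun j v => ((hSdeg j v).2).le
      have hsz' : ∀ i : Fin k, α * n ≤ ((nn i.succ : ℕ) : ℝ) := fun i => hsz i.succ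
      have hsum'' : ∑ i : Fin k, nn i.succ = (W \ S).card := by omega
      obtain ⟨P', hP'sub, hP'dis, hP'iff, hP'card, hP'deg⟩ :=
        ih (fun i => nn i.succ) (W \ S) (β - η) hβ1' hβlow' hdeg' hsz' hsum''
      have hβηge : δ + ε / 2 ≤ β - η := by
        push_cast at hβlow
        nlinarith
      refine ⟨Fin.cases S P', ?_, ?_, ?_, ?_, ?_⟩
      · intro i
        induction i using Fin.cases with
        | zero => simpa using hSW
        | succ i => simpa using (hP'sub i).trans (Finset.sdiff_subset)
      · intro i j hij
        have hdisj : ∀ i' : Fin k, Disjoint S (P' i') :=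
          fun i' => (Finset.sdiff_disjoint (t := W) (s := S)).symm.mono_right (hP'sub i')
        induction i using Fin.cases with
        | zero =>
          induction j using Fin.cases with
          | zero => exact absurd rfl hij
          | succ j => simpa using hdisj j
        | succ i =>
          induction j using Fin.cases with
          | zero => simpa using (hdisj i).symm
          | succ j =>
            have : i ≠ j := fun h => hij (by rw [h])
            simpa using hP'dis i j this
      · intro v
        constructor
        · intro hv
          by_cases hvS : v ∈ S
          · exact ⟨0, by simpa using hvS⟩
          · have : v ∈ W \ S := Finset.mem_sdiff.2 ⟨hv, hvS⟩
            obtain ⟨i, hi⟩ := (hP'iff v).1 this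
            exact ⟨i.succ, by simpa using hi⟩
        · rintro ⟨i, hi⟩
          revert hi
          induction i using Fin.cases with
          | zero => intro hi; exact hSW (by simpa using hi)
          | succ i => intro hi
                      exact Finset.sdiff_subset (hP'sub i (by simpa using hi))
      · intro i
        induction i using Fin.cases with
        | zero => simpa using hScard
        | succ i => simpa using hP'card i
      · intro i j v
        induction i using Fin.cases with
        | zero =>
          have h1 := (hSdeg j v).1.le
          have h2 : (δ + ε / 2) * (s : ℝ) ≤ (β - η) * (s : ℝ) :=
            mul_le_mul_of_nonneg_right hβηge (Nat.cast_nonneg _)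
          simpa using h2.trans h1
        | succ i => simpa using hP'deg i j v

set_option maxHeartbeats 4000000 in
/-- For all `ε, α > 0` there is `n₀` such that for all `n ≥ n₀`, all `δ > 0` and `m ≤ n/ε`:
if `𝒢 = (G_1, …, G_m)` is a graph collection on `[n]` and `V ⊆ [n]` satisfies
`d_{G_i}(v, V) ≥ (δ + ε)n` for all `i` and `v`, then for any `n_1, …, n_k ≥ αn` summing to `|V|`
there is a partition `V = V_1 ∪ ⋯ ∪ V_k` with `|V_i| = n_i` and
`d_{G_j}(v, V_i) ≥ (δ + ε/2)n_i` for all `j ∈ [m]`, `v ∈ [n]`. -/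
theorem partition_into_linear_parts (ε α : ℝ) (hε : 0 < ε) (hα : 0 < α) :
    ∃ n₀ : ℕ, ∀ n : ℕ, n₀ ≤ n → ∀ δ : ℝ, 0 < δ → ∀ m : ℕ, (m : ℝ) ≤ n / ε →
      ∀ 𝒢 : Fin m → SimpleGraph (Fin n), ∀ V : Finset (Fin n),
        (∀ (i : Fin m) (v : Fin n), (δ + ε) * n ≤ (degOn (𝒢 i) v ↑V : ℝ)) →
        ∀ (k : ℕ) (nn : Fin k → ℕ),
          (∀ i, α * n ≤ (nn i : ℝ)) → (∑ i, nn i) = V.card →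
          ∃ P : Fin k → Finset (Fin n),
            (∀ i j, i ≠ j → Disjoint (P i) (P j)) ∧
            (∀ v : Fin n, v ∈ V ↔ ∃ i, v ∈ P i) ∧
            (∀ i, (P i).card = nn i) ∧
            (∀ (i : Fin k) (j : Fin m) (v : Fin n),
              (δ + ε / 2) * (nn i) ≤ (degOn (𝒢 j) v ↑(P i) : ℝ)) := by
  classical
  set η : ℝ := ε * α / 4 with hηdef
  have hη : 0 < η := by positivity
  set q : ℕ := ⌈(4 : ℝ) / η⌉₊ + 1 with hqdef
  have hq0 : 0 < q := by omega
  have hq : 4 ≤ η * q := by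
    have h1 : (4 : ℝ) / η ≤ (q : ℝ) := by
      rw [hqdef]
      push_cast
      linarith [Nat.le_ceil ((4 : ℝ) / η)]
    calc (4 : ℝ) = η * (4 / η) := by field_simp
      _ ≤ η * q := mul_le_mul_of_nonneg_left h1 hη.le
  set ρ : ℝ := (q : ℝ) / (q + 1) with hρdef
  have hρ0 : 0 < ρ := by
    rw [hρdef]
    have : (0:ℝ) < q := by exact_mod_cast hq0
    positivity
  have hρ1 : ρ < 1 := by
    rw [hρdef, div_lt_one (by positivity)]
    linarith
  set c : ℝ := η * α / 2 with hcdef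
  have hc : 0 < c := by positivity
  set σ : ℝ := ρ ^ (c : ℝ) with hσdef
  have hσ0 : 0 < σ := Real.rpow_pos_of_pos hρ0 _
  have hσ1 : σ < 1 := Real.rpow_lt_one hρ0.le hρ1 hc
  -- eventual smallness of n^3 σ^n
  have hsummable : Summable (fun n : ℕ => (n : ℝ) ^ 3 * σ ^ n) :=
    summable_pow_mul_geometric_of_norm_lt_one 3
      (by rw [Real.norm_eq_abs, abs_of_pos hσ0]; exact hσ1)
  have htend := hsummable.tendsto_atTop_zero
  have hb : (0 : ℝ) < ε * ρ / 4 := by positivity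
  obtain ⟨N2, hN2⟩ := Filter.eventually_atTop.1 (htend.eventually (gt_mem_nhds hb))
  set N1 : ℕ := ⌈(16 : ℝ) / (η * α)⌉₊ + 1 with hN1def
  refine ⟨max (max N1 N2) 1, ?_⟩
  intro n hn δ hδ m hm 𝒢 V hdegV k nn hnn hsum
  have hn1 : 1 ≤ n := le_trans (le_max_right _ 1) hn
  have hnR : (1 : ℝ) ≤ n := by exact_mod_cast hn1
  have hnN1 : N1 ≤ n := le_trans (le_trans (le_max_left _ _) (le_max_left _ 1)) hn
  have hnN2 : N2 ≤ n := le_trans (le_trans (le_max_right _ _) (le_max_left _ 1)) hn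
  -- n is large
  have hn16 : 16 ≤ η * (α * n) := by
    have h1 : (16 : ℝ) / (η * α) ≤ (N1 : ℝ) := by
      rw [hN1def]; push_cast; linarith [Nat.le_ceil ((16 : ℝ) / (η * α))]
    have h2 : (N1 : ℝ) ≤ n := by exact_mod_cast hnN1
    have h3 : (16 : ℝ) / (η * α) ≤ n := le_trans h1 h2
    rw [div_le_iff₀ (by positivity)] at h3
    calc (16 : ℝ) ≤ n * (η * α) := h3
      _ = η * (α * n) := by ring
  set G : ℕ := ⌊(η / 2) * (α * n)⌋₊ with hGdef
  have hGle : (G : ℝ) ≤ (η / 2) * (α * n) := Nat.floor_le (by positivity)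
  -- the union-bound numeric inequality
  have hGge : c * n - 1 ≤ (G : ℝ) := by
    have h := Nat.sub_one_lt_floor ((η / 2) * (α * n))
    have heq : c * (n : ℝ) - 1 = (η / 2) * (α * n) - 1 := by rw [hcdef]; ring
    rw [hGdef, heq]
    linarith
  have hρG : ρ ^ G ≤ σ ^ n / ρ := by
    have h1 : ρ ^ G = ρ ^ ((G : ℕ) : ℝ) := (Real.rpow_natCast ρ G).symm
    have h2 : ρ ^ ((G : ℕ) : ℝ) ≤ ρ ^ (c * n - 1 : ℝ) :=
      Real.rpow_le_rpow_of_exponent_ge hρ0 hρ1.le hGge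
    have h3 : ρ ^ (c * n - 1 : ℝ) = ρ ^ (c * (n : ℝ)) * ρ ^ (-1 : ℝ) := by
      rw [← Real.rpow_add hρ0]; ring_nf
    have h4 : ρ ^ (c * (n : ℝ)) = σ ^ n := by
      rw [Real.rpow_mul hρ0.le, hσdef, Real.rpow_natCast]
    have h5 : ρ ^ (-1 : ℝ) = 1 / ρ := by
      rw [Real.rpow_neg_one]; ring
    rw [h1]
    calc ρ ^ ((G : ℕ) : ℝ) ≤ ρ ^ (c * n - 1 : ℝ) := h2
      _ = σ ^ n * (1 / ρ) := by rw [h3, h4, h5]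
      _ = σ ^ n / ρ := by ring
  have hσn : (n : ℝ) ^ 3 * σ ^ n < ε * ρ / 4 := hN2 n hnN2
  have hbig : (2 * m * n * (n + 1) : ℝ) * ρ ^ G < 1 := by
    have hm' : (m : ℝ) ≤ n / ε := hm
    have h1 : (2 * m * n * (n + 1) : ℝ) ≤ 4 / ε * (n : ℝ) ^ 3 := by
      have hn2 : ((n : ℝ) + 1) ≤ 2 * n := by linarith
      have hmn : (m : ℝ) * (2 * n * (n + 1)) ≤ (n / ε) * (2 * n * (2 * n)) := by
        apply mul_le_mul hm' (by nlinarith) (by positivity) (by positivity)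
      calc (2 * m * n * (n + 1) : ℝ) = (m : ℝ) * (2 * n * (n + 1)) := by ring
        _ ≤ (n / ε) * (2 * n * (2 * n)) := hmn
        _ = 4 / ε * (n : ℝ) ^ 3 := by field_simp; ring
    have h2 : (0:ℝ) ≤ ρ ^ G := by positivity
    have h3 : (2 * m * n * (n + 1) : ℝ) * ρ ^ G ≤ (4 / ε * (n : ℝ) ^ 3) * (σ ^ n / ρ) := by
      apply mul_le_mul h1 hρG h2 (by positivity)
    have h4 : (4 / ε * (n : ℝ) ^ 3) * (σ ^ n / ρ) < 1 := by
      have heq : (4 / ε * (n : ℝ) ^ 3) * (σ ^ n / ρ)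
          = ((n : ℝ) ^ 3 * σ ^ n) * (4 / (ε * ρ)) := by
        field_simp
      rw [heq]
      calc ((n : ℝ) ^ 3 * σ ^ n) * (4 / (ε * ρ))
          < (ε * ρ / 4) * (4 / (ε * ρ)) := mul_lt_mul_of_pos_right hσn (by positivity)
        _ = 1 := by field_simp
    linarith
  -- basic facts about V
  have hVn : V.card ≤ n := by
    calc V.card ≤ (Finset.univ : Finset (Fin n)).card := Finset.card_le_univ V
      _ = n := by simp
  have hVnR : ((V.card : ℕ) : ℝ) ≤ n := by exact_mod_cast hVn
  have hβ1 : Fin m → δ + ε ≤ 1 := by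
    intro j
    set v0 : Fin n := ⟨0, hn1⟩
    have h1 := hdegV j v0
    rw [degOn_coe] at h1
    have h2 : (V.filter (fun u => (𝒢 j).Adj v0 u)).card ≤ V.card :=
      Finset.card_filter_le _ _
    have h3 : ((V.filter (fun u => (𝒢 j).Adj v0 u)).card : ℝ) ≤ n := by
      have := le_trans h2 hVn
      exact_mod_cast this
    nlinarith
  have hdeg : ∀ (j : Fin m) (v : Fin n),
      (δ + ε) * V.card ≤ ((V.filter (fun u => (𝒢 j).Adj v u)).card : ℝ) := by
    intro j v
    have h1 := hdegV j v
    rw [degOn_coe] at h1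
    have h2 : (δ + ε) * V.card ≤ (δ + ε) * n :=
      mul_le_mul_of_nonneg_left hVnR (by linarith)
    linarith
  have hβlow : δ + ε / 2 + k * η ≤ (δ + ε) + η := by
    rcases Nat.eq_zero_or_pos k with hk0 | hk
    · subst hk0
      simp only [Nat.cast_zero, zero_mul, add_zero]
      linarith
    · have hkα : (k : ℝ) * (α * n) ≤ n := by
        have h2 : (k : ℝ) * (α * n) = ∑ _i : Fin k, (α * n) := by
          rw [Finset.sum_const, Finset.card_univ, Fintype.card_fin, nsmul_eq_mul]
        have h3 : ∑ _i : Fin k, (α * n) ≤ ∑ i : Fin k, (nn i : ℝ) :=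
          Finset.sum_le_sum (fun i _ => hnn i)
        have h4 : ∑ i : Fin k, (nn i : ℝ) = ((V.card : ℕ) : ℝ) := by
          rw [← hsum]
          push_cast
          rfl
        linarith
      have hkα1 : (k : ℝ) * α ≤ 1 := by
        by_contra hcon
        push_neg at hcon
        have : (n : ℝ) < (k : ℝ) * (α * n) := by nlinarith
        linarith
      have hkη : (k : ℝ) * η ≤ ε / 4 := by
        rw [hηdef]
        calc (k : ℝ) * (ε * α / 4) = ((k : ℝ) * α) * (ε / 4) := by ring
          _ ≤ 1 * (ε / 4) := mul_le_mul_of_nonneg_right hkα1 (by linarith)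
          _ = ε / 4 := by ring
      linarith
  obtain ⟨P, hPsub, hPdis, hPiff, hPcard, hPdeg⟩ :=
    iterate 𝒢 α δ ε η q G hη hα hδ hε hq hq0 hn16 hGle hbig k nn V (δ + ε)
      hβ1 hβlow hdeg hnn hsum
  refine ⟨P, hPdis, hPiff, hPcard, ?_⟩
  intro i j v
  rw [degOn_coe]
  exact hPdeg i j v
end

section
/- Let α ∈ (0, 1) and let n, m, ℓ ≥ 1 be integers satisfying ℓ ≤ α⁷m/10⁵ and α²n ≥ 8m. Let H be a bipartite graph with vertex classes A and B such that |A| = m, |B| = n, and every vertex v ∈ A has degree d_H(v) ≥ αn. Then there are disjoint subsets B₀, B₁ ⊆ B with |B₀| = m − ℓ and |B₁| ≥ α⁷n/10⁵ with the following property: for every subset U ⊆ B₁ of size ℓ, the graph H contains a perfect matching between A and B₀ ∪ U. -/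
open Finset

set_option maxHeartbeats 4000000

private lemma swap_count {m n : ℕ} (R : Fin m → Fin n → Prop) [∀ a b, Decidable (R a b)]
    (Ys : Finset (Fin m)) :
    ∑ b : Fin n, (Ys.filter (fun a => R a b)).card
      = ∑ a ∈ Ys, (univ.filter (fun b => R a b)).card := by
  simp_rw [Finset.card_filter]
  exact Finset.sum_comm

private lemma threshold_count {γ : Type*} [Fintype γ] (f : γ → ℕ) (M θ : ℕ)
    (hM : ∀ b, f b ≤ M) :
    ∑ b : γ, f b ≤ (univ.filter (fun b => θ ≤ f b)).card * M
      + (Fintype.card γ) * (θ - 1) := by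
  classical
  rw [← Finset.sum_filter_add_sum_filter_not univ (fun b => θ ≤ f b)]
  have h1 : ∑ b ∈ univ.filter (fun b => θ ≤ f b), f b
      ≤ (univ.filter (fun b => θ ≤ f b)).card * M := by
    have := Finset.sum_le_card_nsmul (univ.filter (fun b => θ ≤ f b)) f M (fun x _ => hM x)
    simpa [smul_eq_mul] using this
  have h2 : ∑ b ∈ univ.filter (fun b => ¬ θ ≤ f b), f b
      ≤ (Fintype.card γ) * (θ - 1) := by
    have hb : ∀ x ∈ univ.filter (fun b => ¬ θ ≤ f b), f x ≤ θ - 1 := by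
      intro x hx
      have := (Finset.mem_filter.mp hx).2
      omega
    have h3 := Finset.sum_le_card_nsmul (univ.filter (fun b => ¬ θ ≤ f b)) f (θ-1) hb
    have hcard : (univ.filter (fun b => ¬ θ ≤ f b)).card ≤ Fintype.card γ := by
      simpa using Finset.card_filter_le (univ : Finset γ) (fun b => ¬ θ ≤ f b)
    calc ∑ b ∈ univ.filter (fun b => ¬ θ ≤ f b), f b
        ≤ (univ.filter (fun b => ¬ θ ≤ f b)).card * (θ-1) := by
          simpa [smul_eq_mul] using h3
      _ ≤ (Fintype.card γ) * (θ-1) := Nat.mul_le_mul_right _ hcard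
  omega

/-- Let `α ∈ (0, 1)` and `n, m, ℓ ≥ 1` with `ℓ ≤ α⁷m/10⁵` and `α²n ≥ 8m`. Let `H` be a bipartite
graph with classes `A` (of size `m`) and `B` (of size `n`), given by the relation `R`, in which
every vertex of `A` has degree at least `αn`. Then there are disjoint `B₀, B₁ ⊆ B` with
`|B₀| = m - ℓ` and `|B₁| ≥ α⁷n/10⁵` such that for every `U ⊆ B₁` of size `ℓ` there is a perfect
matching between `A` and `B₀ ∪ U`. -/
theorem colour_absorption (α : ℝ) (hα₀ : 0 < α) (hα₁ : α < 1) (n m ℓ : ℕ)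
    (hn : 1 ≤ n) (hm : 1 ≤ m) (hℓ : 1 ≤ ℓ)
    (hℓm : (ℓ : ℝ) ≤ α ^ 7 * m / 10 ^ 5) (hnm : 8 * (m : ℝ) ≤ α ^ 2 * n)
    (R : Fin m → Fin n → Prop)
    (hdeg : ∀ a : Fin m, α * n ≤ ({b : Fin n | R a b}.ncard : ℝ)) :
    ∃ B₀ B₁ : Finset (Fin n), Disjoint B₀ B₁ ∧ B₀.card = m - ℓ ∧
      α ^ 7 * n / 10 ^ 5 ≤ (B₁.card : ℝ) ∧
      ∀ U : Finset (Fin n), U ⊆ B₁ → U.card = ℓ →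
        ∃ f : Fin m → Fin n, Function.Injective f ∧
          (∀ a, R a (f a)) ∧ (∀ a, f a ∈ B₀ ∪ U) := by
  classical
  set N : Fin m → Finset (Fin n) := fun a => univ.filter (fun b => R a b) with hNdef
  set NA : Fin n → Finset (Fin m) := fun b => univ.filter (fun a => R a b) with hNAdef
  have hdeg' : ∀ a, α * n ≤ ((N a).card : ℝ) := by
    intro a
    have h1 : {b : Fin n | R a b} = ↑(N a) := by ext b; simp [hNdef]
    have h2 := hdeg a
    rwa [h1, Set.ncard_coe_finset] at h2
  -- basic real facts
  have hα1 : α ≤ 1 := hα₁.le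
  have hmR : (1:ℝ) ≤ (m:ℝ) := by exact_mod_cast hm
  have hnR : (1:ℝ) ≤ (n:ℝ) := by exact_mod_cast hn
  have hlR : (1:ℝ) ≤ (ℓ:ℝ) := by exact_mod_cast hℓ
  have hα6 : α^6 ≤ 1 := pow_le_one₀ hα₀.le hα1
  have hα5 : α^5 ≤ 1 := pow_le_one₀ hα₀.le hα1
  have hα7m : (10:ℝ)^5 * ℓ ≤ α^7 * m := by nlinarith [hℓm]
  have hαm : (10:ℝ)^5 ≤ α * m := by nlinarith [hα7m, hlR, hα6, hα₀.le, mul_nonneg hα₀.le (by positivity : (0:ℝ) ≤ (m:ℝ))]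
  have h8m : 8*(m:ℝ) ≤ α*n := by nlinarith [hnm, hα₀, hα1, hnR]
  have hαn8e5 : 8*(10:ℝ)^5 ≤ α*n := by nlinarith [h8m, hαm, hα1, hmR]
  -- K
  set K := ⌈(8*(ℓ:ℝ))/α⌉₊ with hKdef
  have hKlb : (8*(ℓ:ℝ))/α ≤ (K:ℝ) := Nat.le_ceil _
  have hKub : (K:ℝ) < (8*(ℓ:ℝ))/α + 1 := Nat.ceil_lt_add_one (by positivity)
  have hlK8 : 8*(ℓ:ℝ) ≤ (8*(ℓ:ℝ))/α := by
    rw [le_div_iff₀ hα₀]; nlinarith [hlR, hα1]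
  have h8lK : 8*ℓ ≤ K := by exact_mod_cast le_trans hlK8 hKlb
  have hK1 : 1 ≤ K := by omega
  have hlαK : (ℓ:ℝ) ≤ α*K/8 := by
    rw [div_le_iff₀ hα₀] at hKlb
    nlinarith [hKlb]
  have hKαm : (K:ℝ) ≤ α*m/2 := by
    have h1 : (8*(ℓ:ℝ))/α ≤ 8*(α^6*m)/10^5 := by
      rw [div_le_div_iff₀ hα₀ (by norm_num : (0:ℝ) < 10^5)]
      nlinarith [hα7m]
    have h2 : α^6*(m:ℝ) ≤ α*m := by nlinarith [hα5, hα₀.le, hmR]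
    nlinarith [hKub, h1, h2, hαm]
  -- W
  set W := (univ : Finset (Fin n)).filter (fun b => K ≤ (NA b).card) with hWdef
  have hsum1 : ∑ b : Fin n, (NA b).card = ∑ a : Fin m, (N a).card := by
    simpa [hNAdef, hNdef] using swap_count R (univ : Finset (Fin m))
  have hNAle : ∀ b, (NA b).card ≤ m := by
    intro b
    simpa using Finset.card_filter_le (univ : Finset (Fin m)) (fun a => R a b)
  have hWsum : ∑ b : Fin n, (NA b).card ≤ W.card * m + n * (K-1) := by
    simpa [hWdef] using threshold_count (fun b => (NA b).card) m K hNAle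
  have hsumlow : (m:ℝ) * (α*n) ≤ ((∑ a : Fin m, (N a).card : ℕ) : ℝ) := by
    push_cast
    calc (m:ℝ)*(α*n) = ∑ _a : Fin m, (α*n) := by
          simp [Finset.sum_const, Finset.card_univ, mul_comm]
      _ ≤ ∑ a : Fin m, ((N a).card:ℝ) := Finset.sum_le_sum (fun a _ => hdeg' a)
  have hWlow : α*n/2 ≤ (W.card : ℝ) := by
    have hcast : ((∑ b : Fin n, (NA b).card : ℕ) : ℝ) ≤ (W.card:ℝ)*m + n*((K:ℝ)-1) := by
      have := hWsum
      have hc : ((W.card * m + n * (K-1) : ℕ) : ℝ) = (W.card:ℝ)*m + n*((K:ℝ)-1) := by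
        push_cast [Nat.cast_sub hK1]
        ring
      calc ((∑ b : Fin n, (NA b).card : ℕ) : ℝ) ≤ ((W.card * m + n * (K-1) : ℕ) : ℝ) := by
            exact_mod_cast this
        _ = _ := hc
    rw [hsum1] at hcast
    have h1 : (m:ℝ)*(α*n) ≤ (W.card:ℝ)*m + n*((K:ℝ)-1) := le_trans hsumlow hcast
    have h2 : (n:ℝ)*((K:ℝ)-1) ≤ n*(α*m/2) := by
      have : (K:ℝ)-1 ≤ α*m/2 := by nlinarith [hKαm]
      nlinarith [this, hnR]
    have hm0 : (0:ℝ) < m := by linarith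
    nlinarith [h1, h2]
  have hWm : m < W.card := by
    have : (m:ℝ) < (W.card:ℝ) := by nlinarith [hWlow, h8m, hmR]
    exact_mod_cast this
  have hlm : ℓ ≤ m := by
    have : (ℓ:ℝ) ≤ (m:ℝ) := by nlinarith [hℓm, hα6, hα₀.le, hα1, hmR]
    exact_mod_cast this
  -- admissible families
  set WY : Finset (Fin m) → Finset (Fin n) := fun Y => W.filter (fun w => NA w ⊆ Y) with hWYdef
  set Q : Finset (Fin n) → Prop :=
    fun C => C ⊆ W ∧ ∀ Y : Finset (Fin m), (C ∩ WY Y).Nonempty → (C ∩ WY Y).card + ℓ ≤ Y.card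
    with hQdef
  have hQempty : Q ∅ := ⟨empty_subset _, fun Y hY => absurd hY (by simp)⟩
  obtain ⟨C, hCQ, hCmax⟩ :
      ∃ C : Finset (Fin n), Q C ∧ ∀ C' : Finset (Fin n), Q C' → C'.card ≤ C.card := by
    obtain ⟨C, hCmem, hmax⟩ :=
      Finset.exists_max_image ((univ : Finset (Fin n)).powerset.filter (fun C => Q C))
        Finset.card ⟨∅, Finset.mem_filter.mpr ⟨by simp, hQempty⟩⟩
    exact ⟨C, (Finset.mem_filter.mp hCmem).2,
      fun C' hC' => hmax C' (Finset.mem_filter.mpr ⟨Finset.mem_powerset.mpr (subset_univ _), hC'⟩)⟩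
  have hCWuniv : C ∩ WY univ = C := by
    ext c
    constructor
    · exact fun hc => mem_of_mem_inter_left hc
    · intro hc
      exact mem_inter.mpr ⟨hc, mem_filter.mpr ⟨hCQ.1 hc, subset_univ _⟩⟩
  have hCcard : C.card + ℓ ≤ m := by
    rcases C.eq_empty_or_nonempty with h | h
    · rw [h]; simpa using hlm
    · have := hCQ.2 univ (by rw [hCWuniv]; exact h)
      rw [hCWuniv] at this
      simpa using this
  obtain ⟨w, hwW, hwC⟩ : ∃ w ∈ W, w ∉ C := by
    by_contra h
    push_neg at h
    have : W.card ≤ C.card := card_le_card (fun x hx => h x hx)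
    omega
  have hQins : ¬ Q (insert w C) := by
    intro hQ'
    have := hCmax _ hQ'
    rw [card_insert_of_notMem hwC] at this
    omega
  obtain ⟨Y, hYne, hYviol⟩ :
      ∃ Y : Finset (Fin m), ((insert w C) ∩ WY Y).Nonempty ∧
        ¬ (((insert w C) ∩ WY Y).card + ℓ ≤ Y.card) := by
    by_contra h
    push_neg at h
    exact hQins ⟨insert_subset hwW hCQ.1, fun Y hY => h Y hY⟩
  have hwWY : w ∈ WY Y := by
    by_contra hw'
    rw [Finset.insert_inter_of_notMem hw'] at hYne hYviol
    exact hYviol (hCQ.2 Y hYne)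
  have hNAw : NA w ⊆ Y := (mem_filter.mp hwWY).2
  have hKw : K ≤ (NA w).card := (mem_filter.mp hwW).2
  have hKY : K ≤ Y.card := le_trans hKw (card_le_card hNAw)
  set CF := C ∩ WY Y with hCFdef
  have hwCF : w ∉ CF := fun h => hwC (mem_of_mem_inter_left h)
  have hinsCF : (insert w C) ∩ WY Y = insert w CF := by
    rw [hCFdef, Finset.insert_inter_of_mem hwWY]
  have hCFY : CF.card + ℓ = Y.card := by
    have hviol : Y.card < CF.card + 1 + ℓ := by
      rw [hinsCF, card_insert_of_notMem hwCF] at hYviol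
      omega
    rcases CF.eq_empty_or_nonempty with h | h
    · have h0 : CF.card = 0 := by rw [h]; simp
      omega
    · have := hCQ.2 Y h
      rw [← hCFdef] at this
      omega
  have hCFsubC : CF ⊆ C := inter_subset_left
  have hCFprops : ∀ c ∈ CF, NA c ⊆ Y ∧ K ≤ (NA c).card := by
    intro c hc
    have h2 := mem_of_mem_inter_right hc
    refine ⟨(mem_filter.mp h2).2, ?_⟩
    have h3 : c ∈ W := (mem_filter.mp h2).1
    exact (mem_filter.mp h3).2
  have hYm' : Y.card ≤ m := by
    simpa using card_le_univ Y
  -- ZF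
  set ZF := (univ : Finset (Fin n)).filter (fun b => ℓ ≤ ((NA b) ∩ Y).card) with hZFdef
  have hsum2 : ∑ b : Fin n, ((NA b) ∩ Y).card = ∑ a ∈ Y, (N a).card := by
    have h1 : ∀ b, (NA b) ∩ Y = Y.filter (fun a => R a b) := by
      intro b; ext a; simp [hNAdef, and_comm]
    simp_rw [h1]
    simpa [hNdef] using swap_count R Y
  have hZFsum : ∑ b : Fin n, ((NA b) ∩ Y).card ≤ ZF.card * Y.card + n * (ℓ-1) := by
    simpa [hZFdef] using
      threshold_count (fun b => ((NA b)∩Y).card) Y.card ℓ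
        (fun b => card_le_card inter_subset_right)
  have hsumlow2 : (Y.card:ℝ) * (α*n) ≤ ((∑ a ∈ Y, (N a).card : ℕ) : ℝ) := by
    push_cast
    calc (Y.card:ℝ)*(α*n) = ∑ _a ∈ Y, (α*n) := by
          simp [Finset.sum_const, mul_comm]
      _ ≤ ∑ a ∈ Y, ((N a).card:ℝ) := Finset.sum_le_sum (fun a _ => hdeg' a)
  have hYpos : (0:ℝ) < (Y.card:ℝ) := by
    have : 1 ≤ Y.card := le_trans hK1 hKY
    exact_mod_cast this
  have hKYR : (K:ℝ) ≤ (Y.card:ℝ) := by exact_mod_cast hKY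
  have hZFlow : 7*(α*n)/8 ≤ (ZF.card:ℝ) := by
    have hcast : ((∑ b : Fin n, ((NA b)∩Y).card : ℕ) : ℝ)
        ≤ (ZF.card:ℝ)*(Y.card:ℝ) + n*((ℓ:ℝ)-1) := by
      have hc : ((ZF.card * Y.card + n * (ℓ-1) : ℕ) : ℝ)
          = (ZF.card:ℝ)*(Y.card:ℝ) + n*((ℓ:ℝ)-1) := by
        push_cast [Nat.cast_sub hℓ]
        ring
      calc ((∑ b : Fin n, ((NA b)∩Y).card : ℕ) : ℝ)
          ≤ ((ZF.card * Y.card + n * (ℓ-1) : ℕ) : ℝ) := by exact_mod_cast hZFsum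
        _ = _ := hc
    rw [hsum2] at hcast
    have h1 : (Y.card:ℝ)*(α*n) ≤ (ZF.card:ℝ)*(Y.card:ℝ) + n*((ℓ:ℝ)-1) := le_trans hsumlow2 hcast
    -- ℓ ≤ αK/8 ≤ α Y.card/8
    have h2 : (n:ℝ)*((ℓ:ℝ)-1) ≤ (n:ℝ)*(α*(Y.card:ℝ)/8) := by
      have : (ℓ:ℝ)-1 ≤ α*(Y.card:ℝ)/8 := by nlinarith [hlαK, hKYR, hα₀]
      nlinarith [this, hnR]
    have h3 : (7*(α*n)/8) * (Y.card:ℝ) ≤ (ZF.card:ℝ) * (Y.card:ℝ) := by linarith [h1, h2]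
    exact le_of_mul_le_mul_right h3 hYpos
  -- B₁
  set t0 := ⌈α^7 * (n:ℝ) / 10^5⌉₊ with ht0def
  have ht0lb : α^7*(n:ℝ)/10^5 ≤ (t0:ℝ) := Nat.le_ceil _
  have ht0ub : (t0:ℝ) < α^7*(n:ℝ)/10^5 + 1 := Nat.ceil_lt_add_one (by positivity)
  have hα7a : α^7 ≤ α := pow_le_of_le_one hα₀.le hα1 (by norm_num)
  have hα7n : α^7*(n:ℝ) ≤ α*n := by nlinarith [hα7a, hnR]
  have ht0αn : (t0:ℝ) ≤ α*n/8 := by nlinarith [ht0ub, hα7n, hαn8e5]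
  have hmαn : (m:ℝ) ≤ α*n/8 := by nlinarith [h8m]
  have hCFm : CF.card ≤ m := by omega
  have hZFCF : t0 + CF.card ≤ ZF.card := by
    have hCFmR : ((CF.card:ℕ):ℝ) ≤ (m:ℝ) := by exact_mod_cast hCFm
    have : ((t0 + CF.card : ℕ):ℝ) ≤ (ZF.card:ℝ) := by
      push_cast
      nlinarith [ht0αn, hCFmR, hmαn, hZFlow]
    exact_mod_cast this
  have hZFsdiff : t0 ≤ (ZF \ CF).card := by
    have h1 : ZF.card - CF.card ≤ (ZF \ CF).card := le_card_sdiff CF ZF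
    omega
  obtain ⟨B₁, hB₁sub, hB₁card⟩ := Finset.exists_subset_card_eq hZFsdiff
  have hB₁ZF : B₁ ⊆ ZF := hB₁sub.trans sdiff_subset
  have hB₁CF : Disjoint B₁ CF := by
    rw [disjoint_left]
    intro b hb
    exact (mem_sdiff.mp (hB₁sub hb)).2
  -- backbone
  set M0 : Fin m → Finset (Fin n) := fun a => (N a) \ (CF ∪ B₁) with hM0def
  have hM0card : ∀ a, m ≤ (M0 a).card := by
    intro a
    have h1 : (N a).card ≤ (M0 a).card + (CF ∪ B₁).card :=
      card_le_card_sdiff_add_card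
    have h2 : (CF ∪ B₁).card ≤ CF.card + B₁.card := card_union_le _ _
    have h3 : (N a).card ≤ (M0 a).card + CF.card + B₁.card := by omega
    have hR : (m:ℝ) ≤ ((M0 a).card : ℝ) := by
      have hc : ((N a).card:ℝ) ≤ ((M0 a).card:ℝ) + CF.card + B₁.card := by exact_mod_cast h3
      have hCFmR : ((CF.card:ℕ):ℝ) ≤ (m:ℝ) := by exact_mod_cast hCFm
      have hB₁R : ((B₁.card:ℕ):ℝ) = (t0:ℝ) := by exact_mod_cast hB₁card
      nlinarith [hdeg' a, hc, hCFmR, hB₁R, ht0αn, hmαn]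
    exact_mod_cast hR
  obtain ⟨g, hginj, hgmem⟩ :
      ∃ g : {x // x ∈ (univ : Finset (Fin m)) \ Y} → Fin n,
        Function.Injective g ∧ ∀ a, g a ∈ M0 a.1 := by
    apply (Finset.all_card_le_biUnion_card_iff_exists_injective
      (fun a : {x // x ∈ (univ : Finset (Fin m)) \ Y} => M0 a.1)).mp
    intro s
    rcases s.eq_empty_or_nonempty with h | ⟨a, ha⟩
    · simp [h]
    · calc s.card ≤ Fintype.card {x // x ∈ (univ : Finset (Fin m)) \ Y} := by
            simpa using card_le_univ s
        _ = ((univ : Finset (Fin m)) \ Y).card := Fintype.card_coe _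
        _ ≤ m := by simpa using card_le_univ ((univ : Finset (Fin m)) \ Y)
        _ ≤ (M0 a.1).card := hM0card _
        _ ≤ (s.biUnion fun x => M0 x.1).card := card_le_card (subset_biUnion_of_mem (fun x => M0 x.1) ha)
  have hn0 : 0 < n := hn
  set gbk : Fin m → Fin n := fun a =>
    if h : a ∈ (univ : Finset (Fin m)) \ Y then g ⟨a, h⟩ else ⟨0, hn0⟩ with hgbkdef
  have hgbkmem : ∀ a ∈ (univ : Finset (Fin m)) \ Y, gbk a ∈ M0 a := by
    intro a ha
    simp only [hgbkdef, dif_pos ha]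
    exact hgmem ⟨a, ha⟩
  have hgbkinj : ∀ a ∈ (univ : Finset (Fin m)) \ Y, ∀ b ∈ (univ : Finset (Fin m)) \ Y,
      gbk a = gbk b → a = b := by
    intro a ha' b hb' hab
    rw [hgbkdef] at hab
    simp only [dif_pos ha', dif_pos hb'] at hab
    have := hginj hab
    simpa using congrArg Subtype.val this
  set B0img := ((univ : Finset (Fin m)) \ Y).image gbk with hB0imgdef
  have hB0imgcard : B0img.card = m - Y.card := by
    rw [hB0imgdef, Finset.card_image_of_injOn
      (fun a ha b hb hab => hgbkinj a (by simpa using ha) b (by simpa using hb) hab),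
      card_sdiff_of_subset (subset_univ _)]
    simp
  set B0 := B0img ∪ CF with hB0def
  have hB0imgCF : Disjoint B0img CF := by
    rw [disjoint_left]
    intro x hx hxCF
    obtain ⟨a, ha, rfl⟩ := mem_image.mp hx
    exact (mem_sdiff.mp (hgbkmem a ha)).2 (mem_union_left _ hxCF)
  have hB0card : B0.card = m - ℓ := by
    rw [hB0def, card_union_of_disjoint hB0imgCF, hB0imgcard]
    omega
  have hB0B₁ : Disjoint B0 B₁ := by
    rw [hB0def, disjoint_union_left]
    constructor
    · rw [disjoint_left]
      intro x hx hxB₁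
      obtain ⟨a, ha, rfl⟩ := mem_image.mp hx
      exact (mem_sdiff.mp (hgbkmem a ha)).2 (mem_union_right _ hxB₁)
    · exact hB₁CF.symm
  refine ⟨B0, B₁, hB0B₁, hB0card, ?_, ?_⟩
  · rw [hB₁card]
    exact ht0lb
  · intro U hUB₁ hUcard
    set MU : Fin m → Finset (Fin n) := fun a =>
      if a ∈ Y then (N a) ∩ (CF ∪ U) else {gbk a} with hMUdef
    have hUZF : U ⊆ ZF := hUB₁.trans hB₁ZF
    have hUCF : Disjoint CF U := (hB₁CF.symm).mono_right hUB₁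
    have key : ∀ s₂ ⊆ Y, s₂.card ≤ (s₂.biUnion (fun a => (N a) ∩ (CF ∪ U))).card := by
      intro s₂ hs₂Y
      set V := s₂.biUnion (fun a => (N a) ∩ (CF ∪ U)) with hVdef
      have hs₂cd : s₂.card ≤ Y.card := card_le_card hs₂Y
      by_cases hcase : s₂.card + ℓ ≤ Y.card
      · -- small s₂
        have hsub : CF \ V ⊆ C ∩ WY (Y \ s₂) := by
          intro c hc
          obtain ⟨hcCF, hcV⟩ := mem_sdiff.mp hc
          have hcW : c ∈ W := (mem_filter.mp (mem_of_mem_inter_right hcCF)).1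
          refine mem_inter.mpr ⟨hCFsubC hcCF, mem_filter.mpr ⟨hcW, ?_⟩⟩
          intro a haNA
          have haY : a ∈ Y := (hCFprops c hcCF).1 haNA
          refine mem_sdiff.mpr ⟨haY, fun haS => hcV ?_⟩
          refine mem_biUnion.mpr ⟨a, haS, mem_inter.mpr ⟨?_, mem_union_left _ hcCF⟩⟩
          have hR : R a c := (mem_filter.mp haNA).2
          simp [hNdef, hR]
        rcases (C ∩ WY (Y \ s₂)).eq_empty_or_nonempty with hemp | hne
        · have hempty : CF \ V = ∅ := by
            rw [← subset_empty]
            rw [hemp] at hsub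
            exact hsub
          have hCFV : CF ⊆ V := sdiff_eq_empty_iff_subset.mp hempty
          have := card_le_card hCFV
          omega
        · have hb := hCQ.2 _ hne
          have h1 : (CF \ V).card ≤ (C ∩ WY (Y \ s₂)).card := card_le_card hsub
          have h2 : (Y \ s₂).card = Y.card - s₂.card := card_sdiff_of_subset hs₂Y
          have h3 : (CF \ V).card + (CF ∩ V).card = CF.card := card_sdiff_add_card_inter _ _
          have h4 : (CF ∩ V).card ≤ V.card := card_le_card inter_subset_right
          omega
      · -- big s₂
        push_neg at hcase
        have hYs2 : (Y \ s₂).card = Y.card - s₂.card := card_sdiff_of_subset hs₂Y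
        have hCFV : CF ⊆ V := by
          intro c hcCF
          by_contra hcV
          have hsubNA : NA c ⊆ Y \ s₂ := by
            intro a haNA
            refine mem_sdiff.mpr ⟨(hCFprops c hcCF).1 haNA, fun haS => hcV ?_⟩
            refine mem_biUnion.mpr ⟨a, haS, mem_inter.mpr ⟨?_, mem_union_left _ hcCF⟩⟩
            have hR : R a c := (mem_filter.mp haNA).2
            simp [hNdef, hR]
          have h1 := card_le_card hsubNA
          have h2 := (hCFprops c hcCF).2
          omega
        have hUV : U ⊆ V := by
          intro u huU
          by_contra huV
          have hsubNA : (NA u) ∩ Y ⊆ Y \ s₂ := by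
            intro a ha
            obtain ⟨haNA, haY⟩ := mem_inter.mp ha
            refine mem_sdiff.mpr ⟨haY, fun haS => huV ?_⟩
            refine mem_biUnion.mpr ⟨a, haS, mem_inter.mpr ⟨?_, mem_union_right _ huU⟩⟩
            have hR : R a u := (mem_filter.mp haNA).2
            simp [hNdef, hR]
          have h1 := card_le_card hsubNA
          have h2 : ℓ ≤ ((NA u) ∩ Y).card := (mem_filter.mp (hUZF huU)).2
          omega
        have hCU : (CF ∪ U).card = CF.card + U.card := card_union_of_disjoint hUCF
        have h5 := card_le_card (union_subset hCFV hUV)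
        omega
    have hHall : ∀ s : Finset (Fin m), s.card ≤ (s.biUnion MU).card := by
      intro s
      have hsplit : (s \ Y) ∪ (s ∩ Y) = s := sdiff_union_inter s Y
      have hbi : s.biUnion MU = ((s \ Y).biUnion MU) ∪ ((s ∩ Y).biUnion MU) := by
        ext x
        simp only [mem_biUnion, mem_union]
        constructor
        · rintro ⟨a, ha, hx⟩
          by_cases h : a ∈ Y
          · exact Or.inr ⟨a, mem_inter.mpr ⟨ha, h⟩, hx⟩
          · exact Or.inl ⟨a, mem_sdiff.mpr ⟨ha, h⟩, hx⟩
        · rintro (⟨a, ha, hx⟩ | ⟨a, ha, hx⟩)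
          · exact ⟨a, (mem_sdiff.mp ha).1, hx⟩
          · exact ⟨a, (mem_inter.mp ha).1, hx⟩
      have h2 : (s ∩ Y).biUnion MU = (s ∩ Y).biUnion (fun a => (N a) ∩ (CF ∪ U)) := by
        refine biUnion_congr rfl ?_
        intro a ha
        have : a ∈ Y := (mem_inter.mp ha).2
        simp [hMUdef, this]
      have h1eq : (s \ Y).biUnion MU = (s \ Y).image gbk := by
        ext x
        simp only [mem_biUnion, mem_image]
        constructor
        · rintro ⟨a, ha, hx⟩
          have haY : a ∉ Y := (mem_sdiff.mp ha).2
          rw [hMUdef] at hx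
          simp only [if_neg haY, mem_singleton] at hx
          exact ⟨a, ha, hx.symm⟩
        · rintro ⟨a, ha, rfl⟩
          have haY : a ∉ Y := (mem_sdiff.mp ha).2
          refine ⟨a, ha, ?_⟩
          rw [hMUdef]
          simp [if_neg haY]
      have hdisj2 : Disjoint ((s \ Y).biUnion MU) ((s ∩ Y).biUnion MU) := by
        rw [h1eq, h2, disjoint_left]
        intro x hx hx2
        obtain ⟨a, ha, rfl⟩ := mem_image.mp hx
        have ha' : a ∈ (univ : Finset (Fin m)) \ Y := by
          simp [mem_sdiff.mp ha |>.2]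
        have hM := mem_sdiff.mp (hgbkmem a ha')
        obtain ⟨a', _, hx2'⟩ := mem_biUnion.mp hx2
        have hmem : gbk a ∈ CF ∪ U := (mem_inter.mp hx2').2
        rcases mem_union.mp hmem with h | h
        · exact hM.2 (mem_union_left _ h)
        · exact hM.2 (mem_union_right _ (hUB₁ h))
      have hc1 : ((s \ Y).image gbk).card = (s \ Y).card := by
        refine Finset.card_image_of_injOn ?_
        intro a ha b hb hab
        have ha2 : a ∈ s \ Y := by simpa using ha
        have hb2 : b ∈ s \ Y := by simpa using hb
        exact hgbkinj a (mem_sdiff.mpr ⟨mem_univ _, (mem_sdiff.mp ha2).2⟩)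
          b (mem_sdiff.mpr ⟨mem_univ _, (mem_sdiff.mp hb2).2⟩) hab
      have hc2 := key (s ∩ Y) inter_subset_right
      have hscard : (s \ Y).card + (s ∩ Y).card = s.card := card_sdiff_add_card_inter s Y
      have hcard1 : (s.biUnion MU).card
          = ((s \ Y).biUnion MU).card + ((s ∩ Y).biUnion MU).card := by
        rw [hbi, card_union_of_disjoint hdisj2]
      rw [hcard1, h1eq, h2, hc1]
      omega
    obtain ⟨f, hfinj, hfmem⟩ :=
      (Finset.all_card_le_biUnion_card_iff_exists_injective MU).mp hHall
    refine ⟨f, hfinj, ?_, ?_⟩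
    · intro a
      by_cases ha : a ∈ Y
      · have := hfmem a
        rw [hMUdef] at this
        simp only [if_pos ha] at this
        have := (mem_inter.mp this).1
        exact (mem_filter.mp this).2
      · have := hfmem a
        rw [hMUdef] at this
        simp only [if_neg ha, mem_singleton] at this
        rw [this]
        have ha' : a ∈ (univ : Finset (Fin m)) \ Y := by simp [ha]
        have := (mem_sdiff.mp (hgbkmem a ha')).1
        exact (mem_filter.mp this).2
    · intro a
      by_cases ha : a ∈ Y
      · have := hfmem a
        rw [hMUdef] at this
        simp only [if_pos ha] at this
        have hmem := (mem_inter.mp this).2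
        rcases mem_union.mp hmem with h | h
        · exact mem_union_left _ (mem_union_right _ h)
        · exact mem_union_right _ h
      · have := hfmem a
        rw [hMUdef] at this
        simp only [if_neg ha, mem_singleton] at this
        rw [this]
        have ha' : a ∈ (univ : Finset (Fin m)) \ Y := by simp [ha]
        exact mem_union_left _ (mem_union_left _ (mem_image_of_mem gbk ha'))
end

section
/- Let n, m ∈ ℕ satisfy 1 ≤ m ≤ n/3. For every tree T on n vertices and every vertex t ∈ V(T), there are two edge-disjoint subtrees T₁, T₂ ⊆ T such that E(T₁) ∪ E(T₂) = E(T), t ∈ V(T₁), and m ≤ |V(T₂)| ≤ 3m. -/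
open SimpleGraph

variable {V : Type*}

namespace TreeSplitAux

/-- If the boundary of `D` points at `v ∉ D`, any walk from `x ∉ D` to `v` can be replaced
by one avoiding `D`. -/
lemma avoid_walk {T : SimpleGraph V} {D : Set V} {v : V}
    (hbd : ∀ a b, T.Adj a b → b ∈ D → a ∉ D → a = v) :
    ∀ {x : V} (_ : T.Walk x v), x ∉ D → ∃ q : T.Walk x v, ∀ z ∈ q.support, z ∉ D := by
  suffices H : ∀ {x y : V} (_ : T.Walk x y),
      (∀ a b, T.Adj a b → b ∈ D → a ∉ D → a = y) → x ∉ D →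
      ∃ q : T.Walk x y, ∀ z ∈ q.support, z ∉ D by
    intro x p hx
    exact H p hbd hx
  intro x y p
  induction p with
  | nil =>
    intro _ hx
    exact ⟨.nil, by simpa using hx⟩
  | @cons a b c hab p ih =>
    intro hbd' ha
    by_cases hb : b ∈ D
    · have : a = c := hbd' a b hab hb ha
      subst this
      exact ⟨.nil, by simpa using ha⟩
    · obtain ⟨q, hq⟩ := ih hbd' hb
      refine ⟨.cons hab q, ?_⟩
      intro z hz
      rw [Walk.support_cons, List.mem_cons] at hz
      rcases hz with rfl | hz
      · exact ha
      · exact hq z hz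

lemma induce_connected {T : SimpleGraph V} {S : Set V} {v : V} (hv : v ∈ S)
    (h : ∀ x ∈ S, ∃ p : T.Walk v x, ∀ z ∈ p.support, z ∈ S) :
    ((⊤ : T.Subgraph).induce S).Connected := by
  rw [Subgraph.connected_iff_forall_exists_walk_subgraph]
  refine ⟨⟨v, by simpa using hv⟩, ?_⟩
  intro x y hx hy
  rw [Subgraph.induce_verts] at hx hy
  obtain ⟨p, hp⟩ := h x hx
  obtain ⟨q, hq⟩ := h y hy
  refine ⟨p.reverse.append q, ?_⟩
  have hsupp : ∀ z ∈ (p.reverse.append q).support, z ∈ S := by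
    intro z hz
    rw [Walk.mem_support_append_iff] at hz
    rcases hz with hz | hz
    · exact hp z (by rwa [Walk.support_reverse, List.mem_reverse] at hz)
    · exact hq z hz
  constructor
  · intro z hz
    rw [Walk.verts_toSubgraph] at hz
    exact by simpa using hsupp z hz
  · intro a b hab
    have haG : T.Adj a b := hab.adj_sub
    have ha : a ∈ S := hsupp a ((Walk.mem_verts_toSubgraph _).mp hab.fst_mem)
    have hb : b ∈ S := hsupp b ((Walk.mem_verts_toSubgraph _).mp hab.snd_mem)
    simp [Subgraph.induce_adj, ha, hb, haG]

end TreeSplitAux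

namespace TreeSplitAux

/-- `S` is a connected set hanging at `v`, avoiding `t` except possibly at `v`. -/
def Good (T : SimpleGraph V) (t : V) (S : Set V) (v : V) : Prop :=
  v ∈ S ∧ (∀ x ∈ S, ∃ p : T.Walk v x, ∀ z ∈ p.support, z ∈ S) ∧
    (∀ a b, T.Adj a b → b ∈ S → a ∉ S → b = v) ∧ t ∉ S \ {v}

lemma good_univ (T : SimpleGraph V) (hT : T.Connected) (t : V) :
    Good T t Set.univ t := by
  refine ⟨Set.mem_univ t, fun x _ => ?_, fun a b _ _ h => absurd (Set.mem_univ a) h, by simp⟩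
  exact (hT.preconnected t x).elim fun p => ⟨p, fun z _ => Set.mem_univ z⟩

lemma exists_good [Fintype V] (T : SimpleGraph V) (hT : T.IsTree) (t : V)
    (m : ℕ) (hm : 1 ≤ m) (hn : m ≤ Fintype.card V) :
    ∃ S v, Good T t S v ∧ m ≤ S.ncard ∧ S.ncard ≤ 2 * m := by
  classical
  have hP : ∃ k, ∃ S : Set V, ∃ v, Good T t S v ∧ m ≤ S.ncard ∧ S.ncard = k :=
    ⟨Fintype.card V, Set.univ, t, good_univ T hT.isConnected t,
      by simp only [Set.ncard_univ, Nat.card_eq_fintype_card]; exact hn,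
      by simp [Set.ncard_univ, Nat.card_eq_fintype_card]⟩
  obtain ⟨S, v, hgood, hmS, hSk⟩ := Nat.find_spec hP
  have hmin : ∀ (S' : Set V) (v' : V), Good T t S' v' → m ≤ S'.ncard →
      Nat.find hP ≤ S'.ncard := fun S' v' hg hm' =>
    le_of_not_gt fun hlt => Nat.find_min hP hlt ⟨S', v', hg, hm', rfl⟩
  refine ⟨S, v, hgood, hmS, ?_⟩
  obtain ⟨hvS, hconn, hbd, htS⟩ := hgood
  by_cases hone : ∀ u ∈ S, u = v
  · have hS1 : S = {v} := Set.eq_singleton_iff_unique_mem.mpr ⟨hvS, hone⟩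
    rw [hS1, Set.ncard_singleton]
    omega
  push_neg at hone
  obtain ⟨u, huS, huv⟩ := hone
  set C : Set V := {x | ∃ p : T.Walk u x, ∀ z ∈ p.support, z ∈ S \ {v}} with hCdef
  have huSv : u ∈ S \ {v} := ⟨huS, huv⟩
  have hCu : u ∈ C := ⟨.nil, by simpa using huSv⟩
  have hCsub : C ⊆ S \ {v} := fun x hx => hx.choose_spec x (Walk.end_mem_support _)
  have hCext : ∀ x ∈ C, ∀ y, T.Adj x y → y ∈ S \ {v} → y ∈ C := by
    rintro x ⟨p, hp⟩ y hxy hy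
    refine ⟨p.concat hxy, ?_⟩
    intro z hz
    rw [Walk.support_concat, List.mem_append] at hz
    rcases hz with hz | hz
    · exact hp z hz
    · simp only [List.mem_singleton] at hz
      exact hz ▸ hy
  have hCin : ∀ a b, T.Adj a b → b ∈ C → a ∉ C → a = v := by
    intro a b hab hbC haC
    by_contra hav
    have haS : a ∈ S := by
      by_contra haS
      exact (hCsub hbC).2 (by simp [hbd a b hab (hCsub hbC).1 haS])
    exact haC (hCext b hbC a hab.symm ⟨haS, by simpa using hav⟩)
  have hCwalkall : ∀ {x y : V} (p : T.Walk x y),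
      (∀ z ∈ p.support, z ∈ S \ {v}) → x ∈ C → ∀ z ∈ p.support, z ∈ C := by
    intro x y p
    induction p with
    | nil =>
      intro _ hx z hz
      rw [Walk.support_nil, List.mem_singleton] at hz
      exact hz ▸ hx
    | @cons a b c hab p ih =>
      intro hp ha z hz
      have hbC : b ∈ C := hCext a ha b hab (hp b (by simp))
      rw [Walk.support_cons, List.mem_cons] at hz
      rcases hz with rfl | hz
      · exact ha
      · exact ih (fun w hw => hp w (by rw [Walk.support_cons]; exact List.mem_cons_of_mem _ hw))
          hbC z hz
  have hCwalk : ∀ x ∈ C, ∃ p : T.Walk u x, ∀ z ∈ p.support, z ∈ C := by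
    rintro x ⟨p, hp⟩
    exact ⟨p, hCwalkall p hp hCu⟩
  -- find the attachment vertex of `C`
  have hc : ∃ c, T.Adj v c ∧ c ∈ C := by
    obtain ⟨p0, hp0⟩ := hconn u huS
    suffices H : ∀ {x y : V} (w : T.Walk x y), (∀ z ∈ w.support, z ∈ S) → x ∈ C → y = v →
        ∃ c, T.Adj v c ∧ c ∈ C by
      exact H p0.reverse
        (fun z hz => hp0 z (by rwa [Walk.support_reverse, List.mem_reverse] at hz)) hCu rfl
    intro x y w
    induction w with
    | nil =>
      intro _ hx hy
      exact absurd (by simpa using (hCsub hx).2) (by simp [← hy])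
    | @cons a b c hab w ih =>
      intro hw ha hy
      by_cases hbv : b = v
      · exact ⟨a, hbv ▸ hab.symm, ha⟩
      · have hbS : b ∈ S := hw b (by simp)
        exact ih (fun z hz => hw z (by rw [Walk.support_cons]; exact List.mem_cons_of_mem _ hz))
          (hCext a ha b hab ⟨hbS, by simpa using hbv⟩) hy
  obtain ⟨c, hvc, hcC⟩ := hc
  -- C is Good at c
  have hgoodC : Good T t C c := by
    refine ⟨hcC, ?_, ?_, ?_⟩
    · intro x hx
      obtain ⟨p, hp⟩ := hCwalk c hcC
      obtain ⟨q, hq⟩ := hCwalk x hx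
      refine ⟨p.reverse.append q, ?_⟩
      intro z hz
      rw [Walk.mem_support_append_iff] at hz
      rcases hz with hz | hz
      · exact hp z (by rwa [Walk.support_reverse, List.mem_reverse] at hz)
      · exact hq z hz
    · intro a b hab hbC haC
      have hav : a = v := hCin a b hab hbC haC
      rw [hav] at hab
      by_contra hbc
      obtain ⟨p, hp⟩ := hCwalk c hcC
      obtain ⟨q, hq⟩ := hCwalk b hbC
      set r : T.Walk c b := p.reverse.append q with hr
      have hrC : ∀ z ∈ r.support, z ∈ C := by
        intro z hz
        rw [hr, Walk.mem_support_append_iff] at hz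
        rcases hz with hz | hz
        · exact hp z (by rwa [Walk.support_reverse, List.mem_reverse] at hz)
        · exact hq z hz
      have hvr : v ∉ r.toPath.val.support := fun h =>
        (hCsub (hrC v (Walk.support_toPath_subset r h))).2 rfl
      have hp1 : (Walk.cons hab Walk.nil : T.Walk v b).IsPath := by
        simp [hab.ne]
      have hp2 : (Walk.cons hvc r.toPath.val).IsPath :=
        r.toPath.prop.cons hvr
      have := (hT.existsUnique_path v b).unique hp1 hp2
      have hlen := congrArg Walk.length this
      simp only [Walk.length_cons, Walk.length_nil] at hlen
      have : r.toPath.val.length = 0 := by omega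
      exact hbc (Walk.eq_of_length_eq_zero this).symm
    · exact fun h => htS ⟨(hCsub h.1).1, (hCsub h.1).2⟩
  -- S \ C is Good at v
  have hvC : v ∉ C := fun h => (hCsub h).2 rfl
  have hgoodSC : Good T t (S \ C) v := by
    refine ⟨⟨hvS, hvC⟩, ?_, ?_, ?_⟩
    · intro x hx
      have hbdD : ∀ a b, T.Adj a b → b ∈ C ∪ Sᶜ → a ∉ C ∪ Sᶜ → a = v := by
        intro a b hab hbD haD
        rw [Set.mem_union, not_or, Set.notMem_compl_iff] at haD
        rcases hbD with hbC | hbS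
        · exact hCin a b hab hbC haD.1
        · exact hbd b a hab.symm haD.2 hbS
      obtain ⟨p0, hp0⟩ := hconn x hx.1
      obtain ⟨q, hq⟩ := avoid_walk hbdD p0.reverse
        (by rw [Set.mem_union, not_or, Set.notMem_compl_iff]; exact ⟨hx.2, hx.1⟩)
      refine ⟨q.reverse, ?_⟩
      intro z hz
      rw [Walk.support_reverse, List.mem_reverse] at hz
      have := hq z hz
      rw [Set.mem_union, not_or, Set.notMem_compl_iff] at this
      exact ⟨this.2, this.1⟩
    · intro a b hab hbSC haSC
      by_cases haS : a ∈ S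
      · have haC : a ∈ C := by
          by_contra haC
          exact haSC ⟨haS, haC⟩
        exact hCin b a hab.symm haC hbSC.2
      · exact hbd a b hab hbSC.1 haS
    · exact fun h => htS ⟨h.1.1, h.2⟩
  -- size bounds from minimality
  have hCS : C ⊆ S := fun x hx => (hCsub hx).1
  have hCssub : C ⊂ S := ⟨hCS, fun h => hvC (h hvS)⟩
  have hSCssub : S \ C ⊂ S := ⟨Set.diff_subset, fun h => (h huS).2 hCu⟩
  have hClt : C.ncard < S.ncard := Set.ncard_lt_ncard hCssub S.toFinite
  have hSClt : (S \ C).ncard < S.ncard := Set.ncard_lt_ncard hSCssub S.toFinite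
  have hCm : C.ncard < m := by
    by_contra h
    push_neg at h
    have := hmin C c hgoodC h
    omega
  have hSCm : (S \ C).ncard < m := by
    by_contra h
    push_neg at h
    have := hmin (S \ C) v hgoodSC h
    omega
  have hsum : (S \ C).ncard + C.ncard = S.ncard :=
    Set.ncard_diff_add_ncard_of_subset hCS S.toFinite
  omega

end TreeSplitAux

/-- Let `1 ≤ m ≤ n/3`. Every `n`-vertex tree `T` with a vertex `t` admits two edge-disjoint
subtrees `T₁, T₂ ⊆ T` with `E(T₁) ∪ E(T₂) = E(T)`, `t ∈ V(T₁)` and `m ≤ |V(T₂)| ≤ 3m`. -/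
theorem tree_split_off_piece (n m : ℕ) (hm₁ : 1 ≤ m) (hm₂ : (m : ℝ) ≤ n / 3)
    (T : SimpleGraph (Fin n)) (hT : T.IsTree) (t : Fin n) :
    ∃ T₁ T₂ : T.Subgraph, T₁.Connected ∧ T₂.Connected ∧
      Disjoint T₁.edgeSet T₂.edgeSet ∧
      T₁.edgeSet ∪ T₂.edgeSet = T.edgeSet ∧
      t ∈ T₁.verts ∧
      m ≤ T₂.verts.ncard ∧ T₂.verts.ncard ≤ 3 * m := by
  classical
  have hn3 : 3 * m ≤ n := by
    rw [le_div_iff₀ (by norm_num : (0:ℝ) < 3)] at hm₂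
    have : (m : ℝ) * 3 ≤ (n : ℝ) := hm₂
    have := (by exact_mod_cast this : m * 3 ≤ n)
    omega
  obtain ⟨S, v, ⟨hvS, hconn, hbd, htS⟩, hmS, hS2⟩ :=
    TreeSplitAux.exists_good T hT t m hm₁ (by rw [Fintype.card_fin]; omega)
  set A : Set (Fin n) := Sᶜ ∪ {v} with hA
  refine ⟨(⊤ : T.Subgraph).induce A, (⊤ : T.Subgraph).induce S, ?_, ?_, ?_, ?_, ?_, ?_, ?_⟩
  · -- T₁ connected
    refine TreeSplitAux.induce_connected (Set.mem_union_right _ rfl) ?_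
    intro x hx
    have hbdD : ∀ a b, T.Adj a b → b ∈ S \ {v} → a ∉ S \ {v} → a = v := by
      intro a b hab hb ha
      by_cases hav : a = v
      · exact hav
      · have haS : a ∉ S := fun h => ha ⟨h, by simpa using hav⟩
        exact absurd (hbd a b hab hb.1 haS) (by simpa using hb.2)
    have hxD : x ∉ S \ {v} := by
      rcases hx with hx | hx
      · exact fun h => hx h.1
      · exact fun h => h.2 hx
    obtain ⟨p0⟩ := hT.isConnected.preconnected x v
    obtain ⟨q, hq⟩ := TreeSplitAux.avoid_walk hbdD p0 hxD
    refine ⟨q.reverse, ?_⟩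
    intro z hz
    rw [Walk.support_reverse, List.mem_reverse] at hz
    have := hq z hz
    rw [Set.mem_diff, not_and, not_not] at this
    by_cases hzS : z ∈ S
    · exact Set.mem_union_right _ (this hzS)
    · exact Set.mem_union_left _ hzS
  · -- T₂ connected
    exact TreeSplitAux.induce_connected hvS hconn
  · -- edge-disjoint
    rw [Set.disjoint_left]
    intro e he1 he2
    induction e with
    | h a b =>
      rw [Subgraph.mem_edgeSet, Subgraph.induce_adj] at he1 he2
      have hav : a = v := by
        rcases he1.1 with h | h
        · exact absurd he2.1 h
        · exact h
      have hbv : b = v := by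
        rcases he1.2.1 with h | h
        · exact absurd he2.2.1 h
        · exact h
      exact (he1.2.2.ne) (hav.trans hbv.symm)
  · -- union of edge sets
    ext e
    induction e with
    | h a b =>
      simp only [Set.mem_union, Subgraph.mem_edgeSet, Subgraph.induce_adj, Subgraph.top_adj,
        mem_edgeSet]
      constructor
      · rintro (⟨_, _, h⟩ | ⟨_, _, h⟩) <;> exact h
      · intro hadj
        by_cases ha : a ∈ S <;> by_cases hb : b ∈ S
        · exact Or.inr ⟨ha, hb, hadj⟩
        · have : a = v := hbd b a hadj.symm ha hb
          exact Or.inl ⟨Or.inr (by simp [this]), Or.inl hb, hadj⟩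
        · have : b = v := hbd a b hadj hb ha
          exact Or.inl ⟨Or.inl ha, Or.inr (by simp [this]), hadj⟩
        · exact Or.inl ⟨Or.inl ha, Or.inl hb, hadj⟩
  · -- t in T₁
    rw [Subgraph.induce_verts]
    by_cases htSmem : t ∈ S
    · have : t = v := by
        by_contra h
        exact htS ⟨htSmem, by simpa using h⟩
      exact Set.mem_union_right _ (by simp [this])
    · exact Set.mem_union_left _ htSmem
  · rw [Subgraph.induce_verts]; exact hmS
  · rw [Subgraph.induce_verts]; omega
end

section
/- Let n, m₁, m₃, m₄ ∈ ℕ satisfy 1 ≤ m₁, m₃, m₄ ≤ n/10. For every tree T on n vertices there exist four edge-disjoint subtrees T₁, T₂, T₃, T₄ of T such that E(T) = E(T₁) ∪ E(T₂) ∪ E(T₃) ∪ E(T₄), m_i ≤ |V(T_i)| ≤ 3m_i for each i ∈ {1, 3, 4}, and both T₁ ∪ T₂ and T₁ ∪ T₂ ∪ T₃ are connected trees. -/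
open SimpleGraph

namespace TreeFourSplit

variable {n : ℕ} (T : SimpleGraph (Fin n))

abbrev stp (B : Set (Fin n)) (u v : Fin n) : Prop := u ∈ B ∧ v ∈ B ∧ T.Adj u v

abbrev rch (B : Set (Fin n)) : Fin n → Fin n → Prop := Relation.ReflTransGen (stp T B)

def conn (B : Set (Fin n)) : Prop := B.Nonempty ∧ ∀ a ∈ B, ∀ b ∈ B, rch T B a b

variable {T}

lemma rch_mono {B B' : Set (Fin n)} (h : B ⊆ B') {a b : Fin n} (hr : rch T B a b) :
    rch T B' a b :=
  Relation.ReflTransGen.mono (fun _ _ (hs : stp T B _ _) => ⟨h hs.1, h hs.2.1, hs.2.2⟩) a b hr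

lemma rch_symm {B : Set (Fin n)} {a b : Fin n} (h : rch T B a b) : rch T B b a := by
  induction h with
  | refl => exact Relation.ReflTransGen.refl
  | tail _ h2 ih =>
      exact Relation.ReflTransGen.trans
        (Relation.ReflTransGen.single ⟨h2.2.1, h2.1, h2.2.2.symm⟩) ih

lemma rch_mem_right {B : Set (Fin n)} {a b : Fin n} (ha : a ∈ B) (h : rch T B a b) : b ∈ B := by
  induction h with
  | refl => exact ha
  | tail _ h2 _ => exact h2.2.1

lemma rch_trans {B : Set (Fin n)} {a b c : Fin n} (h1 : rch T B a b) (h2 : rch T B b c) :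
    rch T B a c := Relation.ReflTransGen.trans h1 h2

variable (T)

/-- the component ("class") of `z` inside `B`. -/
abbrev cls (B : Set (Fin n)) (z : Fin n) : Set (Fin n) := {w ∈ B | rch T B z w}

lemma cls_subset {B : Set (Fin n)} {z : Fin n} : cls T B z ⊆ B := fun _ h => h.1

lemma mem_cls_self {B : Set (Fin n)} {z : Fin n} (hz : z ∈ B) : z ∈ cls T B z :=
  ⟨hz, Relation.ReflTransGen.refl⟩

variable {T}

lemma cls_closed {B : Set (Fin n)} {z a b : Fin n} (ha : a ∈ cls T B z) (hs : stp T B a b) :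
    b ∈ cls T B z := ⟨hs.2.1, ha.2.tail hs⟩

lemma rch_cls {B : Set (Fin n)} {z w : Fin n} (h : rch T B z w) :
    rch T (cls T B z) z w := by
  induction h with
  | refl => exact Relation.ReflTransGen.refl
  | tail h1 h2 ih =>
      exact ih.tail ⟨⟨h2.1, h1⟩, ⟨h2.2.1, h1.tail h2⟩, h2.2.2⟩

lemma conn_cls {B : Set (Fin n)} {z : Fin n} (hz : z ∈ B) : conn T (cls T B z) := by
  refine ⟨⟨z, mem_cls_self T hz⟩, fun a ha b hb => ?_⟩
  exact rch_trans (rch_symm (rch_cls ha.2)) (rch_cls hb.2)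

lemma mem_cls_symm {B : Set (Fin n)} {z u : Fin n} (hz : z ∈ B) (h : u ∈ cls T B z) :
    z ∈ cls T B u := ⟨hz, rch_symm h.2⟩

lemma cls_subset_cls {B : Set (Fin n)} {z u : Fin n} (h : u ∈ cls T B z) :
    cls T B u ⊆ cls T B z := fun w hw => ⟨hw.1, rch_trans h.2 hw.2⟩

lemma reach_out {B : Set (Fin n)} {p z : Fin n} (hB : conn T B) (hp : p ∈ B) (hz : z ∈ B \ {p}) :
    ∃ a₀ ∈ cls T (B \ {p}) z, T.Adj p a₀ ∧ rch T (cls T (B \ {p}) z ∪ {p}) z p := by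
  have key : ∀ b, rch T B z b →
      (b ∈ cls T (B \ {p}) z ∧ rch T (cls T (B \ {p}) z ∪ {p}) z b) ∨
      (∃ a₀ ∈ cls T (B \ {p}) z, T.Adj p a₀ ∧ rch T (cls T (B \ {p}) z ∪ {p}) z p) := by
    intro b h
    induction h with
    | refl => exact Or.inl ⟨mem_cls_self T hz, Relation.ReflTransGen.refl⟩
    | @tail b c h1 h2 ih =>
      rcases ih with ⟨hbC, hr⟩ | hdone
      · by_cases hc : c = p
        · subst hc
          exact Or.inr ⟨b, hbC, h2.2.2.symm,
            hr.tail ⟨Set.mem_union_left _ hbC, Set.mem_union_right _ rfl, h2.2.2⟩⟩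
        · have hcC : c ∈ cls T (B \ {p}) z := cls_closed hbC ⟨hbC.1, ⟨h2.2.1, hc⟩, h2.2.2⟩
          exact Or.inl ⟨hcC, hr.tail
            ⟨Set.mem_union_left _ hbC, Set.mem_union_left _ hcC, h2.2.2⟩⟩
      · exact Or.inr hdone
  rcases key p (hB.2 z hz.1 p hp) with ⟨hpC, _⟩ | h
  · exact absurd hpC.1 (by simp)
  · exact h

lemma rch_walk {B : Set (Fin n)} {a b : Fin n} (ha : a ∈ B) (h : rch T B a b) :
    ∃ w : T.Walk a b, ∀ v ∈ w.support, v ∈ B := by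
  induction h with
  | refl => exact ⟨Walk.nil, by simp [ha]⟩
  | @tail b c h1 h2 ih =>
    obtain ⟨w, hw⟩ := ih
    refine ⟨w.concat h2.2.2, ?_⟩
    intro v hv
    rw [Walk.support_concat, List.mem_append] at hv
    rcases hv with hv | hv
    · exact hw v hv
    · simp at hv; exact hv ▸ h2.2.1

lemma nbr_unique (hT : T.IsTree) {B : Set (Fin n)} {p a₀ a₁ : Fin n} (hp : p ∉ B)
    (h0 : a₀ ∈ B) (hadj0 : T.Adj p a₀) (hadj1 : T.Adj p a₁)
    (hr : rch T B a₀ a₁) : a₀ = a₁ := by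
  have ha1B : a₁ ∈ B := rch_mem_right h0 hr
  obtain ⟨w, hw⟩ := rch_walk h0 hr
  have hpw : p ∉ w.bypass.support := fun h => hp (hw p (w.support_bypass_subset h))
  have hP1 : (Walk.cons hadj0 w.bypass).IsPath := (w.bypass_isPath).cons hpw
  have hP2 : (Walk.cons hadj1 Walk.nil).IsPath := by
    refine Walk.IsPath.nil.cons ?_
    simp only [Walk.support_nil, List.mem_singleton]
    exact fun h => hp (h ▸ ha1B)
  have heq := hT.IsAcyclic.path_unique ⟨Walk.cons hadj0 w.bypass, hP1⟩ ⟨Walk.cons hadj1 Walk.nil, hP2⟩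
  have hsup := congrArg (fun q : T.Path p a₁ => q.1.support) heq
  simp only [Walk.support_cons, Walk.support_nil] at hsup
  have : w.bypass.support = [a₁] := by injection hsup
  have h0' := w.bypass.support_eq_cons
  rw [this] at h0'
  injection h0' with h _
  exact h.symm

lemma conn_singleton (p : Fin n) : conn T ({p} : Set (Fin n)) := by
  refine ⟨⟨p, rfl⟩, fun a ha b hb => ?_⟩
  rw [Set.mem_singleton_iff] at ha hb
  subst ha; subst hb
  exact Relation.ReflTransGen.refl

lemma split (hT : T.IsTree) :
    ∀ N (B : Set (Fin n)), B.ncard = N → conn T B → ∀ p ∈ B, ∀ m : ℕ, 1 ≤ m → m ≤ B.ncard →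
    ∃ A x, A ⊆ B ∧ x ∈ A ∧ conn T A ∧ conn T ((B \ A) ∪ {x}) ∧ p ∈ (B \ A) ∪ {x} ∧
      m ≤ A.ncard ∧ A.ncard ≤ 2 * m ∧
      ∀ a ∈ A, a ≠ x → ∀ b ∈ B, b ∉ A → ¬ T.Adj a b := by
  intro N
  induction N using Nat.strong_induction_on with
  | _ N IH =>
  intro B hBN hB p hp m hm1 hmB
  by_cases hsmall : B.ncard ≤ 2 * m
  · refine ⟨B, p, subset_rfl, hp, hB, ?_, Set.mem_union_right _ rfl, hmB, hsmall, ?_⟩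
    · have h : (B \ B) ∪ {p} = ({p} : Set (Fin n)) := by simp
      rw [h]; exact conn_singleton p
    · intro a _ _ b hbB hbA; exact absurd hbB hbA
  push_neg at hsmall
  have hfin : B.Finite := Set.toFinite B
  have hnsub : ¬ B ⊆ {p} := by
    intro hsub
    have := Set.ncard_le_ncard hsub (Set.toFinite _)
    rw [Set.ncard_singleton] at this
    omega
  obtain ⟨z, hzB, hzp⟩ := Set.not_subset.mp hnsub
  have hzD : z ∈ B \ {p} := ⟨hzB, hzp⟩
  obtain ⟨a₀, ha₀C, hadj, _⟩ := reach_out hB hp hzD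
  have hCsub : cls T (B \ {p}) z ⊆ B \ {p} := cls_subset T
  have hCB : cls T (B \ {p}) z ⊆ B := fun w hw => (hCsub hw).1
  have hpC : p ∉ cls T (B \ {p}) z := fun h => (hCsub h).2 rfl
  have hCne : (cls T (B \ {p}) z).Nonempty := ⟨z, mem_cls_self T hzD⟩
  have hCltB : (cls T (B \ {p}) z).ncard < B.ncard := by
    refine Set.ncard_lt_ncard ?_ hfin
    rw [Set.ssubset_def]
    exact ⟨hCB, fun h => hpC (h hp)⟩
  -- disjointness of other classes from C
  have hdisj : ∀ u ∈ B \ {p}, u ∉ cls T (B \ {p}) z →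
      ∀ w ∈ cls T (B \ {p}) u, w ∉ cls T (B \ {p}) z := by
    intro u hu huC w hwu hwz
    exact huC (cls_subset_cls hwz (mem_cls_symm hu hwu))
  by_cases hCm : m ≤ (cls T (B \ {p}) z).ncard
  · -- recurse into the big component
    obtain ⟨A, x, hAC, hxA, hconnA, hconnR, ha₀R, hmA, hA2m, hne⟩ :=
      IH _ (hBN ▸ hCltB) _ rfl (conn_cls hzD) a₀ ha₀C m hm1 hCm
    have hpA : p ∉ A := fun h => hpC (hAC h)
    have hpR : p ∈ (B \ A) ∪ {x} := Set.mem_union_left _ ⟨hp, hpA⟩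
    have hsubR'' : (cls T (B \ {p}) z \ A) ∪ {x} ⊆ (B \ A) ∪ {x} := by
      intro w hw
      rcases hw with ⟨h1, h2⟩ | h
      · exact Set.mem_union_left _ ⟨hCB h1, h2⟩
      · exact Set.mem_union_right _ h
    have ha₀R' : a₀ ∈ (B \ A) ∪ {x} := hsubR'' ha₀R
    have hstep : ∀ v ∈ (cls T (B \ {p}) z \ A) ∪ {x}, rch T ((B \ A) ∪ {x}) v p := by
      intro v hv
      exact (rch_mono hsubR'' (hconnR.2 v hv a₀ ha₀R)).tail ⟨ha₀R', hpR, hadj.symm⟩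
    have hreach : ∀ u ∈ (B \ A) ∪ {x}, rch T ((B \ A) ∪ {x}) u p := by
      intro u hu
      rcases hu with ⟨huB, huA⟩ | hux
      · by_cases hup : u = p
        · exact hup ▸ Relation.ReflTransGen.refl
        · by_cases huC : u ∈ cls T (B \ {p}) z
          · exact hstep u (Set.mem_union_left _ ⟨huC, huA⟩)
          · obtain ⟨_, _, _, hr⟩ := reach_out hB hp ⟨huB, hup⟩
            refine rch_mono ?_ hr
            intro w hw
            rcases hw with hw | hw
            · refine Set.mem_union_left _ ⟨(cls_subset T hw).1, fun hwA => ?_⟩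
              exact hdisj u ⟨huB, hup⟩ huC w hw (hAC hwA)
            · exact hw ▸ hpR
      · exact hstep u (Set.mem_union_right _ hux)
    refine ⟨A, x, hAC.trans hCB, hxA, hconnA, ?_, hpR, hmA, hA2m, ?_⟩
    · exact ⟨⟨p, hpR⟩, fun a ha b hb => rch_trans (hreach a ha) (rch_symm (hreach b hb))⟩
    · intro a haA hax b hbB hbA hadj'
      by_cases hbp : b = p
      · subst hbp
        have haC : a ∈ cls T (B \ {b}) z := hAC haA
        have haa₀ : a = a₀ :=
          nbr_unique hT hpC haC hadj'.symm hadj ((conn_cls hzD).2 a haC a₀ ha₀C)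
        rcases ha₀R with h | h
        · exact h.2 (haa₀ ▸ haA)
        · exact hax (haa₀.trans h)
      · by_cases hbC : b ∈ cls T (B \ {p}) z
        · exact hne a haA hax b hbC hbA hadj'
        · exact hbC (cls_closed (hAC haA) ⟨hCsub (hAC haA), ⟨hbB, hbp⟩, hadj'⟩)
  · -- remove the small component and recurse
    push_neg at hCm
    have hCfin : (cls T (B \ {p}) z).Finite := Set.toFinite _
    have hC1 : 1 ≤ (cls T (B \ {p}) z).ncard := by
      rw [Nat.one_le_iff_ne_zero, Ne, Set.ncard_eq_zero hCfin]
      exact hCne.ne_empty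
    have hB'card : (B \ cls T (B \ {p}) z).ncard = B.ncard - (cls T (B \ {p}) z).ncard :=
      Set.ncard_diff hCB hCfin
    have hpB' : p ∈ B \ cls T (B \ {p}) z := ⟨hp, hpC⟩
    have hreach' : ∀ u ∈ B \ cls T (B \ {p}) z, rch T (B \ cls T (B \ {p}) z) u p := by
      intro u hu
      by_cases hup : u = p
      · exact hup ▸ Relation.ReflTransGen.refl
      · obtain ⟨_, _, _, hr⟩ := reach_out hB hp ⟨hu.1, hup⟩
        refine rch_mono ?_ hr
        intro w hw
        rcases hw with hw | hw
        · exact ⟨(cls_subset T hw).1, hdisj u ⟨hu.1, hup⟩ hu.2 w hw⟩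
        · exact hw ▸ hpB'
    have hconnB' : conn T (B \ cls T (B \ {p}) z) :=
      ⟨⟨p, hpB'⟩, fun a ha b hb => rch_trans (hreach' a ha) (rch_symm (hreach' b hb))⟩
    obtain ⟨A, x, hAB', hxA, hconnA, hconnR, hpR', hmA, hA2m, hne⟩ :=
      IH (B \ cls T (B \ {p}) z).ncard (by omega) _ rfl hconnB' p hpB' m hm1 (by omega)
    have hAB : A ⊆ B := hAB'.trans Set.diff_subset
    have hR'R : ((B \ cls T (B \ {p}) z) \ A) ∪ {x} ⊆ (B \ A) ∪ {x} := by
      intro w hw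
      rcases hw with ⟨h1, h2⟩ | h
      · exact Set.mem_union_left _ ⟨h1.1, h2⟩
      · exact Set.mem_union_right _ h
    have hpR : p ∈ (B \ A) ∪ {x} := hR'R hpR'
    have hreach : ∀ u ∈ (B \ A) ∪ {x}, rch T ((B \ A) ∪ {x}) u p := by
      intro u hu
      have hconnR' := hconnR
      rcases hu with ⟨huB, huA⟩ | hux
      · by_cases huC : u ∈ cls T (B \ {p}) z
        · have hup : u ≠ p := fun h => hpC (h ▸ huC)
          obtain ⟨_, _, _, hr⟩ := reach_out hB hp ⟨huB, hup⟩
          refine rch_mono ?_ hr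
          intro w hw
          rcases hw with hw | hw
          · have hwC : w ∈ cls T (B \ {p}) z := cls_subset_cls huC hw
            exact Set.mem_union_left _ ⟨hCB hwC, fun hwA => (hAB' hwA).2 hwC⟩
          · exact hw ▸ hpR
        · exact rch_mono hR'R (hconnR.2 u (Set.mem_union_left _ ⟨⟨huB, huC⟩, huA⟩) p hpR')
      · exact rch_mono hR'R (hconnR.2 u (Set.mem_union_right _ hux) p hpR')
    refine ⟨A, x, hAB, hxA, hconnA, ?_, hpR, hmA, hA2m, ?_⟩
    · exact ⟨⟨p, hpR⟩, fun a ha b hb => rch_trans (hreach a ha) (rch_symm (hreach b hb))⟩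
    · intro a haA hax b hbB hbA hadj'
      by_cases hbB' : b ∈ B \ cls T (B \ {p}) z
      · exact hne a haA hax b hbB' hbA hadj'
      · have hbC : b ∈ cls T (B \ {p}) z := by
          by_contra h; exact hbB' ⟨hbB, h⟩
        have hap : a ≠ p := by
          intro h
          rcases hpR' with hpl | hpx
          · exact hpl.2 (h ▸ haA)
          · exact hax (h.trans hpx)
        have haD : a ∈ B \ {p} := ⟨hAB haA, hap⟩
        have : a ∈ cls T (B \ {p}) z := cls_closed hbC ⟨hCsub hbC, haD, hadj'.symm⟩
        exact (hAB' haA).2 this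

variable (T)

/-- The subgraph of `T` induced on a vertex set `A`. -/
def mkSub (A : Set (Fin n)) : T.Subgraph where
  verts := A
  Adj a b := a ∈ A ∧ b ∈ A ∧ T.Adj a b
  adj_sub h := h.2.2
  edge_vert h := h.1
  symm := ⟨fun a b h => ⟨h.2.1, h.1, h.2.2.symm⟩⟩

@[simp] lemma mkSub_verts (A : Set (Fin n)) : (mkSub T A).verts = A := rfl

@[simp] lemma mkSub_adj {A : Set (Fin n)} {a b : Fin n} :
    (mkSub T A).Adj a b ↔ a ∈ A ∧ b ∈ A ∧ T.Adj a b := Iff.rfl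

variable {T}

lemma mkSub_connected {A : Set (Fin n)} (h : conn T A) : (mkSub T A).Connected := by
  rw [SimpleGraph.Subgraph.connected_iff]
  refine ⟨?_, h.1⟩
  rw [Subgraph.preconnected_iff]
  rintro ⟨u, hu⟩ ⟨v, hv⟩
  have hr := h.2 u hu v hv
  suffices H : ∀ w, rch T A u w → ∀ (hw : w ∈ A), (mkSub T A).coe.Reachable ⟨u, hu⟩ ⟨w, hw⟩ from
    H v hr hv
  intro w hw
  induction hw with
  | refl => intro _; exact Reachable.refl _
  | @tail b c h1 h2 ih =>
    intro hc
    exact (ih h2.1).trans (SimpleGraph.Adj.reachable (by rw [Subgraph.coe_adj]; exact h2))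

lemma mkSub_disjoint {A B : Set (Fin n)} (h : Set.Subsingleton (A ∩ B)) :
    Disjoint (mkSub T A).edgeSet (mkSub T B).edgeSet := by
  rw [Set.disjoint_left]
  intro e he1 he2
  induction e using Sym2.ind with
  | _ a b =>
    rw [Subgraph.mem_edgeSet, mkSub_adj] at he1 he2
    have hab : a = b := h ⟨he1.1, he2.1⟩ ⟨he1.2.1, he2.2.1⟩
    exact T.loopless.irrefl b (hab ▸ he1.2.2)

lemma mkSub_sup {A B C : Set (Fin n)} (hAC : A ⊆ C) (hBC : B ⊆ C) (hU : A ∪ B = C)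
    (hsplit : ∀ a b, a ∈ C → b ∈ C → T.Adj a b → (a ∈ A ∧ b ∈ A) ∨ (b ∈ B ∧ a ∈ B)) :
    mkSub T A ⊔ mkSub T B = mkSub T C := by
  apply Subgraph.ext
  · exact hU
  · ext a b
    rw [Subgraph.sup_adj, mkSub_adj, mkSub_adj, mkSub_adj]
    constructor
    · rintro (⟨h1, h2, h3⟩ | ⟨h1, h2, h3⟩)
      · exact ⟨hAC h1, hAC h2, h3⟩
      · exact ⟨hBC h1, hBC h2, h3⟩
    · rintro ⟨h1, h2, h3⟩
      rcases hsplit a b h1 h2 h3 with ⟨u, v⟩ | ⟨u, v⟩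
      · exact Or.inl ⟨u, v, h3⟩
      · exact Or.inr ⟨v, u, h3⟩

lemma split_edge_cases {A B : Set (Fin n)} {x : Fin n} (hx : x ∈ A)
    (hne : ∀ a ∈ A, a ≠ x → ∀ b ∈ B, b ∉ A → ¬ T.Adj a b) :
    ∀ a b, a ∈ B → b ∈ B → T.Adj a b →
      (a ∈ A ∧ b ∈ A) ∨ (a ∈ (B \ A) ∪ {x} ∧ b ∈ (B \ A) ∪ {x}) := by
  intro a b ha hb hadj
  by_cases haA : a ∈ A
  · by_cases hbA : b ∈ A
    · exact Or.inl ⟨haA, hbA⟩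
    · have hax : a = x := by
        by_contra h
        exact hne a haA h b hb hbA hadj
      exact Or.inr ⟨Set.mem_union_right _ hax, Set.mem_union_left _ ⟨hb, hbA⟩⟩
  · by_cases hbA : b ∈ A
    · have hbx : b = x := by
        by_contra h
        exact hne b hbA h a ha haA hadj.symm
      exact Or.inr ⟨Set.mem_union_left _ ⟨ha, haA⟩, Set.mem_union_right _ hbx⟩
    · exact Or.inr ⟨Set.mem_union_left _ ⟨ha, haA⟩, Set.mem_union_left _ ⟨hb, hbA⟩⟩

lemma conn_univ (hT : T.IsTree) (hn : 0 < n) : conn T (Set.univ : Set (Fin n)) := by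
  refine ⟨⟨⟨0, hn⟩, trivial⟩, fun a _ b _ => ?_⟩
  obtain ⟨w⟩ := hT.isConnected a b
  induction w with
  | nil => exact Relation.ReflTransGen.refl
  | cons h p ih => exact Relation.ReflTransGen.head ⟨trivial, trivial, h⟩ (ih trivial trivial)

lemma mem_cut {X A : Set (Fin n)} {x u : Fin n} (hu : u ∈ (X \ A) ∪ {x}) (hA : u ∈ A) :
    u = x := by
  rcases hu with h | h
  · exact absurd hA h.2
  · exact h

end TreeFourSplit

open TreeFourSplit

/-- Let `1 ≤ m₁, m₃, m₄ ≤ n/10`. Every `n`-vertex tree `T` admits four edge-disjoint subtrees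
`T₁, T₂, T₃, T₄` whose edge sets cover `E(T)`, with `mᵢ ≤ |V(Tᵢ)| ≤ 3mᵢ` for `i ∈ {1, 3, 4}`,
and such that `T₁ ∪ T₂` and `T₁ ∪ T₂ ∪ T₃` are connected trees. -/
theorem tree_four_split (n m₁ m₃ m₄ : ℕ)
    (hm₁ : 1 ≤ m₁) (hm₃ : 1 ≤ m₃) (hm₄ : 1 ≤ m₄)
    (hm₁' : (m₁ : ℝ) ≤ n / 10) (hm₃' : (m₃ : ℝ) ≤ n / 10) (hm₄' : (m₄ : ℝ) ≤ n / 10)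
    (T : SimpleGraph (Fin n)) (hT : T.IsTree) :
    ∃ T₁ T₂ T₃ T₄ : T.Subgraph,
      T₁.Connected ∧ T₂.Connected ∧ T₃.Connected ∧ T₄.Connected ∧
      Disjoint T₁.edgeSet T₂.edgeSet ∧ Disjoint T₁.edgeSet T₃.edgeSet ∧
      Disjoint T₁.edgeSet T₄.edgeSet ∧ Disjoint T₂.edgeSet T₃.edgeSet ∧
      Disjoint T₂.edgeSet T₄.edgeSet ∧ Disjoint T₃.edgeSet T₄.edgeSet ∧
      T₁.edgeSet ∪ T₂.edgeSet ∪ T₃.edgeSet ∪ T₄.edgeSet = T.edgeSet ∧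
      (m₁ ≤ T₁.verts.ncard ∧ T₁.verts.ncard ≤ 3 * m₁) ∧
      (m₃ ≤ T₃.verts.ncard ∧ T₃.verts.ncard ≤ 3 * m₃) ∧
      (m₄ ≤ T₄.verts.ncard ∧ T₄.verts.ncard ≤ 3 * m₄) ∧
      (T₁ ⊔ T₂).Connected ∧ (T₁ ⊔ T₂ ⊔ T₃).Connected := by
  have h10₁ : 10 * m₁ ≤ n := by
    have : (10 * m₁ : ℝ) ≤ n := by linarith
    exact_mod_cast this
  have h10₃ : 10 * m₃ ≤ n := by
    have : (10 * m₃ : ℝ) ≤ n := by linarith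
    exact_mod_cast this
  have h10₄ : 10 * m₄ ≤ n := by
    have : (10 * m₄ : ℝ) ≤ n := by linarith
    exact_mod_cast this
  have hn : 0 < n := by omega
  have hU : (Set.univ : Set (Fin n)).ncard = n := by
    rw [Set.ncard_univ]; simp
  obtain ⟨A₄, x₄, hA₄sub, hx₄, hcA₄, hcB₁, -, hm₄le, hA₄le, hne₄⟩ :=
    split hT Set.univ.ncard Set.univ rfl (conn_univ hT hn) ⟨0, hn⟩ trivial m₄ hm₄
      (by rw [hU]; omega)
  set B₁ := (Set.univ \ A₄) ∪ {x₄} with hB₁def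
  have hdiff₄ : (Set.univ \ A₄).ncard = n - A₄.ncard := by
    rw [Set.ncard_diff hA₄sub, hU]
  have hB₁ge : n - A₄.ncard ≤ B₁.ncard :=
    hdiff₄ ▸ Set.ncard_le_ncard Set.subset_union_left (Set.toFinite _)
  have hm₃B₁ : m₃ ≤ B₁.ncard := by omega
  obtain ⟨A₃, x₃, hA₃sub, hx₃, hcA₃, hcB₂, -, hm₃le, hA₃le, hne₃⟩ :=
    split hT B₁.ncard B₁ rfl hcB₁ x₄ (Set.mem_union_right _ rfl) m₃ hm₃ hm₃B₁
  set B₂ := (B₁ \ A₃) ∪ {x₃} with hB₂def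
  have hdiff₃ : (B₁ \ A₃).ncard = B₁.ncard - A₃.ncard := Set.ncard_diff hA₃sub
  have hB₂ge : B₁.ncard - A₃.ncard ≤ B₂.ncard :=
    hdiff₃ ▸ Set.ncard_le_ncard Set.subset_union_left (Set.toFinite _)
  have hm₁B₂ : m₁ ≤ B₂.ncard := by omega
  obtain ⟨A₁, x₁, hA₁sub, hx₁, hcA₁, hcA₂, -, hm₁le, hA₁le, hne₁⟩ :=
    split hT B₂.ncard B₂ rfl hcB₂ x₃ (Set.mem_union_right _ rfl) m₁ hm₁ hm₁B₂
  set A₂ := (B₂ \ A₁) ∪ {x₁} with hA₂def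
  have hB₂B₁ : B₂ ⊆ B₁ := by
    intro u hu
    rcases hu with h | h
    · exact h.1
    · exact h ▸ hA₃sub hx₃
  have hA₂B₂ : A₂ ⊆ B₂ := by
    intro u hu
    rcases hu with h | h
    · exact h.1
    · exact h ▸ hA₁sub hx₁
  have hU₂ : A₁ ∪ A₂ = B₂ := by
    apply Set.Subset.antisymm
    · exact Set.union_subset hA₁sub hA₂B₂
    · intro u hu
      by_cases h : u ∈ A₁
      · exact Set.mem_union_left _ h
      · exact Set.mem_union_right _ (Set.mem_union_left _ ⟨hu, h⟩)
  have hU₁ : B₂ ∪ A₃ = B₁ := by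
    apply Set.Subset.antisymm
    · exact Set.union_subset hB₂B₁ hA₃sub
    · intro u hu
      by_cases h : u ∈ A₃
      · exact Set.mem_union_right _ h
      · exact Set.mem_union_left _ (Set.mem_union_left _ ⟨hu, h⟩)
  have hec₄ := split_edge_cases hx₄ hne₄
  have hec₃ := split_edge_cases hx₃ hne₃
  have hec₁ := split_edge_cases hx₁ hne₁
  have hsup12 : mkSub T A₁ ⊔ mkSub T A₂ = mkSub T B₂ := by
    refine mkSub_sup hA₁sub hA₂B₂ hU₂ ?_
    intro a b ha hb hadj
    rcases hec₁ a b ha hb hadj with h | h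
    · exact Or.inl h
    · exact Or.inr ⟨h.2, h.1⟩
  have hsup123 : mkSub T B₂ ⊔ mkSub T A₃ = mkSub T B₁ := by
    refine mkSub_sup hB₂B₁ hA₃sub hU₁ ?_
    intro a b ha hb hadj
    rcases hec₃ a b ha hb hadj with h | h
    · exact Or.inr ⟨h.2, h.1⟩
    · exact Or.inl h
  have hd12 : Set.Subsingleton (A₁ ∩ A₂) := by
    intro u hu v hv
    rw [mem_cut hu.2 hu.1, mem_cut hv.2 hv.1]
  have hd13 : Set.Subsingleton (A₁ ∩ A₃) := by
    intro u hu v hv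
    rw [mem_cut (hA₁sub hu.1) hu.2, mem_cut (hA₁sub hv.1) hv.2]
  have hd14 : Set.Subsingleton (A₁ ∩ A₄) := by
    intro u hu v hv
    rw [mem_cut (hB₂B₁ (hA₁sub hu.1)) hu.2, mem_cut (hB₂B₁ (hA₁sub hv.1)) hv.2]
  have hd23 : Set.Subsingleton (A₂ ∩ A₃) := by
    intro u hu v hv
    rw [mem_cut (hA₂B₂ hu.1) hu.2, mem_cut (hA₂B₂ hv.1) hv.2]
  have hd24 : Set.Subsingleton (A₂ ∩ A₄) := by
    intro u hu v hv
    rw [mem_cut (hB₂B₁ (hA₂B₂ hu.1)) hu.2, mem_cut (hB₂B₁ (hA₂B₂ hv.1)) hv.2]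
  have hd34 : Set.Subsingleton (A₃ ∩ A₄) := by
    intro u hu v hv
    rw [mem_cut (hA₃sub hu.1) hu.2, mem_cut (hA₃sub hv.1) hv.2]
  refine ⟨mkSub T A₁, mkSub T A₂, mkSub T A₃, mkSub T A₄,
    mkSub_connected hcA₁, mkSub_connected hcA₂, mkSub_connected hcA₃, mkSub_connected hcA₄,
    mkSub_disjoint hd12, mkSub_disjoint hd13, mkSub_disjoint hd14,
    mkSub_disjoint hd23, mkSub_disjoint hd24, mkSub_disjoint hd34,
    ?_, ⟨by simpa using hm₁le, by simp only [mkSub_verts]; omega⟩,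
    ⟨by simpa using hm₃le, by simp only [mkSub_verts]; omega⟩,
    ⟨by simpa using hm₄le, by simp only [mkSub_verts]; omega⟩, ?_, ?_⟩
  · apply Set.Subset.antisymm
    · refine Set.union_subset (Set.union_subset (Set.union_subset ?_ ?_) ?_) ?_ <;>
        exact Subgraph.edgeSet_subset _
    · intro e he
      induction e using Sym2.ind with
      | _ a b =>
        rw [mem_edgeSet] at he
        rcases hec₄ a b trivial trivial he with ⟨h1, h2⟩ | ⟨h1, h2⟩
        · exact Set.mem_union_right _ (by rw [Subgraph.mem_edgeSet]; exact ⟨h1, h2, he⟩)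
        · rcases hec₃ a b h1 h2 he with ⟨g1, g2⟩ | ⟨g1, g2⟩
          · exact Set.mem_union_left _ (Set.mem_union_right _
              (by rw [Subgraph.mem_edgeSet]; exact ⟨g1, g2, he⟩))
          · rcases hec₁ a b g1 g2 he with ⟨f1, f2⟩ | ⟨f1, f2⟩
            · exact Set.mem_union_left _ (Set.mem_union_left _ (Set.mem_union_left _
                (by rw [Subgraph.mem_edgeSet]; exact ⟨f1, f2, he⟩)))
            · exact Set.mem_union_left _ (Set.mem_union_left _ (Set.mem_union_right _
                (by rw [Subgraph.mem_edgeSet]; exact ⟨f1, f2, he⟩)))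
  · rw [hsup12]
    exact mkSub_connected hcB₂
  · rw [hsup12, hsup123]
    exact mkSub_connected hcB₁
end

section
/- Let m, n ∈ ℕ satisfy m ≤ n − 1. Let 𝒢 = (G₁, …, G_m) be a graph collection on the vertex set [n] with δ(𝒢) ≥ m. Let T be a tree with exactly m edges, let t ∈ V(T) and v ∈ [n]. Then there is a copy S of T in ∪_{i∈[m]} G_i in which t is copied to v, together with a bijection ψ: E(S) → [m] such that e ∈ E(G_{ψ(e)}) for each edge e of S (i.e., a rainbow copy of T using every colour in [m]). -/
open SimpleGraph

/-- A BFS-style enumeration of a tree: vertices listed `g 0 = t, g 1, …, g m` so that each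
later vertex has a neighbour (its "parent") occurring strictly earlier. -/
lemma tree_enum {VT : Type*} [Fintype VT] {m : ℕ} (T : SimpleGraph VT) (hT : T.IsTree)
    (hcard : Fintype.card VT = m + 1) (t : VT) :
    ∃ (g : Fin (m + 1) ≃ VT) (pr : Fin (m + 1) → Fin (m + 1)),
      g 0 = t ∧ ∀ j, j ≠ 0 → pr j < j ∧ T.Adj (g (pr j)) (g j) := by
  classical
  obtain ⟨hconn, _⟩ := hT
  let g₀ : VT ≃ Fin (m + 1) := Fintype.equivFinOfCardEq hcard
  let d : Fin (m + 1) → ℕ := fun i => T.dist t (g₀.symm i)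
  let σ : Equiv.Perm (Fin (m + 1)) := Tuple.sort d
  let g : Fin (m + 1) ≃ VT := σ.trans g₀.symm
  have hmono : ∀ i j : Fin (m + 1), i ≤ j → T.dist t (g i) ≤ T.dist t (g j) := by
    intro i j hij
    exact Tuple.monotone_sort d hij
  have hg0 : g 0 = t := by
    have h1 : T.dist t (g 0) ≤ T.dist t (g (g.symm t)) := hmono _ _ (Fin.zero_le _)
    rw [g.apply_symm_apply, SimpleGraph.dist_self] at h1
    obtain ⟨p, hp⟩ := hconn.exists_walk_length_eq_dist t (g 0)
    have : p.length = 0 := by omega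
    exact (SimpleGraph.Walk.eq_of_length_eq_zero this).symm
  have key : ∀ j : Fin (m + 1), ∃ i : Fin (m + 1), j ≠ 0 →
      i < j ∧ T.Adj (g i) (g j) := by
    intro j
    by_cases hj : j = 0
    · exact ⟨0, fun h => absurd hj h⟩
    · have hne : t ≠ g j := by
        intro h
        exact hj (g.injective (by rw [hg0, ← h]))
      have hdpos : 0 < T.dist t (g j) := hconn.pos_dist_of_ne hne
      obtain ⟨p, hp⟩ := hconn.exists_walk_length_eq_dist t (g j)
      have hlen : 0 < p.length := by omega
      -- penultimate vertex
      set q : VT := p.getVert (p.length - 1) with hq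
      have hadj : T.Adj q (g j) := by
        have := p.adj_getVert_succ (i := p.length - 1) (by omega)
        rw [show p.length - 1 + 1 = p.length by omega, p.getVert_length] at this
        exact this
      have hqs : q ∈ p.support := by
        rw [SimpleGraph.Walk.mem_support_iff_exists_getVert]
        exact ⟨p.length - 1, rfl, by omega⟩
      have hqlt : T.dist t q < T.dist t (g j) := by
        have hsplit := congrArg SimpleGraph.Walk.length (p.take_spec hqs)
        rw [SimpleGraph.Walk.length_append] at hsplit
        have hd2 : (p.dropUntil q hqs).length ≠ 0 := by
          intro h0
          exact hadj.ne (SimpleGraph.Walk.eq_of_length_eq_zero h0)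
        have hdle : T.dist t q ≤ (p.takeUntil q hqs).length :=
          SimpleGraph.dist_le _
        omega
      refine ⟨g.symm q, fun _ => ⟨?_, by rw [g.apply_symm_apply]; exact hadj⟩⟩
      by_contra hlt
      push_neg at hlt
      have := hmono j (g.symm q) hlt
      rw [g.apply_symm_apply] at this
      omega
  choose pr hpr using key
  exact ⟨g, pr, hg0, hpr⟩

/-- Let `m ≤ n - 1` and let `𝒢 = (G_1, …, G_m)` be a graph collection on `[n]` with
`δ(𝒢) ≥ m`. Then for every tree `T` with exactly `m` edges, every `t ∈ V(T)` and every
`v ∈ [n]` there is a copy of `T` in `∪ᵢ Gᵢ` in which `t` is copied to `v`, together with a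
bijection `ψ : E(T) → [m]` assigning each edge a distinct colour containing its copy. -/
theorem rainbow_tree_exact_colours (m n : ℕ) (hmn : m ≤ n - 1)
    (𝒢 : Fin m → SimpleGraph (Fin n))
    (hdeg : ∀ i v, m ≤ deg (𝒢 i) v)
    {VT : Type*} [Fintype VT] (T : SimpleGraph VT) (hT : T.IsTree)
    (hTm : T.edgeSet.ncard = m) (t : VT) (v : Fin n) :
    ∃ (f : VT → Fin n) (ψ : T.edgeSet → Fin m),
      Function.Injective f ∧ f t = v ∧ Function.Bijective ψ ∧
      ∀ e : T.edgeSet, Sym2.map f (e : Sym2 VT) ∈ (𝒢 (ψ e)).edgeSet := by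
  classical
  have hfinE : Fintype T.edgeSet := Fintype.ofFinite _
  have hcardE : Nat.card T.edgeSet = m := by
    rw [Nat.card_coe_set_eq, hTm]
  have hcV : Fintype.card VT = m + 1 := by
    have h1 := hT.card_edgeFinset
    have h2 : T.edgeFinset.card = m := by
      rw [← hTm, ← Set.ncard_coe_finset, SimpleGraph.coe_edgeFinset]
    omega
  obtain ⟨g, pr, hg0, hpr⟩ := tree_enum T hT hcV t
  -- Greedy rainbow embedding along the enumeration.
  have main : ∀ k, k ≤ m → ∃ F : ℕ → Fin n,
      F 0 = v ∧ (∀ i, i ≤ k → ∀ j, j ≤ k → F i = F j → i = j) ∧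
      ∀ j : Fin (m + 1), ∀ hj0 : 0 < (j : ℕ), ∀ _hjk : (j : ℕ) ≤ k,
        (𝒢 ⟨(j : ℕ) - 1, (tsub_lt_iff_right hj0).mpr j.isLt⟩).Adj (F ((pr j : ℕ))) (F (j : ℕ)) := by
    intro k
    induction k with
    | zero =>
      intro _
      exact ⟨fun _ => v, rfl, fun i hi j hj _ => by omega, fun j hj0 hjk => by omega⟩
    | succ k ih =>
      intro hk1
      obtain ⟨F, hF0, hFinj, hFadj⟩ := ih (by omega)
      set J : Fin (m + 1) := ⟨k + 1, by omega⟩ with hJ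
      have hJ0 : J ≠ 0 := by
        simp [hJ, Fin.ext_iff]
      have hJv : (J : ℕ) = k + 1 := rfl
      obtain ⟨hJlt, hJadj⟩ := hpr J hJ0
      set u : Fin n := F ((pr J : ℕ)) with hu
      set i₀ : Fin m := ⟨k, by omega⟩ with hi₀
      set Fb : Set (Fin n) := F '' Set.Iic k with hFb
      have hprJk : (pr J : ℕ) ≤ k := by
        have := hJlt
        rw [Fin.lt_def, hJv] at this
        omega
      have huFb : u ∈ Fb := ⟨(pr J : ℕ), hprJk, rfl⟩
      have hns : ¬ ((𝒢 i₀).neighborSet u ⊆ Fb \ {u}) := by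
        intro hsub
        have h1 : ((𝒢 i₀).neighborSet u).ncard ≤ (Fb \ {u}).ncard :=
          Set.ncard_le_ncard hsub (Set.toFinite _)
        have h2 : (Fb \ {u}).ncard < Fb.ncard :=
          Set.ncard_diff_singleton_lt_of_mem huFb (Set.toFinite _)
        have h3 : Fb.ncard ≤ (Set.Iic k).ncard :=
          Set.ncard_image_le (Set.finite_Iic k)
        have h4 : (Set.Iic k).ncard = k + 1 := by
          rw [← Finset.coe_Iic, Set.ncard_coe_finset, Nat.card_Iic]
        have h5 := hdeg i₀ u
        rw [deg] at h5
        omega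
      obtain ⟨w, hwN, hwn⟩ := Set.not_subset.mp hns
      have hadjuw : (𝒢 i₀).Adj u w := hwN
      have hwu : w ≠ u := hadjuw.ne'
      have hwFb : w ∉ Fb := fun h => hwn ⟨h, hwu⟩
      refine ⟨Function.update F (k + 1) w, ?_, ?_, ?_⟩
      · rw [Function.update_of_ne (by omega)]; exact hF0
      · intro i hi j hj hij
        rcases Nat.lt_or_ge i (k + 1) with hik | hik <;>
          rcases Nat.lt_or_ge j (k + 1) with hjk | hjk
        · rw [Function.update_of_ne (by omega), Function.update_of_ne (by omega)] at hij
          exact hFinj i (by omega) j (by omega) hij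
        · have hj' : j = k + 1 := by omega
          rw [Function.update_of_ne (by omega), hj', Function.update_self] at hij
          exact absurd (⟨i, Set.mem_Iic.mpr (by omega), hij⟩ : w ∈ Fb) hwFb
        · have hi' : i = k + 1 := by omega
          rw [hi', Function.update_self, Function.update_of_ne (by omega)] at hij
          exact absurd (⟨j, Set.mem_Iic.mpr (by omega), hij.symm⟩ : w ∈ Fb) hwFb
        · omega
      · intro j hj0 hjk
        rcases Nat.lt_or_ge (j : ℕ) (k + 1) with hjk' | hjk'
        · have hprj : (pr j : ℕ) < (j : ℕ) := (hpr j (by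
            intro h; rw [h] at hj0; simp at hj0)).1
          rw [Function.update_of_ne (by omega), Function.update_of_ne (by omega)]
          exact hFadj j hj0 (by omega)
        · have hjJ : j = J := by
            apply Fin.ext
            rw [hJv]; omega
          subst hjJ
          have hi₀v : (i₀ : ℕ) = k := rfl
          have hc : (𝒢 ⟨(J : ℕ) - 1, by rw [hJv]; omega⟩) = 𝒢 i₀ := by
            have hx : (⟨(J : ℕ) - 1, by rw [hJv]; omega⟩ : Fin m) = i₀ := by
              apply Fin.ext
              show (J : ℕ) - 1 = (i₀ : ℕ)
              omega
            rw [hx]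
          rw [hc, Function.update_of_ne (by omega : (pr J : ℕ) ≠ k + 1),
            show ((J : ℕ)) = k + 1 from rfl, Function.update_self]
          exact hadjuw
  obtain ⟨F, hF0, hFinj, hFadj⟩ := main m le_rfl
  set f : VT → Fin n := fun x => F ((g.symm x : Fin (m + 1)) : ℕ) with hf
  have hfg : ∀ j : Fin (m + 1), f (g j) = F (j : ℕ) := by
    intro j; simp [hf]
  have hfinj : Function.Injective f := by
    intro x y hxy
    have : ((g.symm x : Fin (m + 1)) : ℕ) = ((g.symm y : Fin (m + 1)) : ℕ) :=
      hFinj _ (by omega) _ (by omega) hxy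
    have := Fin.ext this
    exact (by simpa using congrArg g this)
  have hft : f t = v := by
    rw [← hg0, hfg]
    exact hF0
  -- the edge-colour bijection
  set φ : Fin m → T.edgeSet := fun c =>
    ⟨s(g (pr c.succ), g c.succ),
      T.mem_edgeSet.mpr (hpr c.succ (Fin.succ_ne_zero c)).2⟩ with hφ
  have hφinj : Function.Injective φ := by
    intro c₁ c₂ h
    have h' : s(g (pr c₁.succ), g c₁.succ) = s(g (pr c₂.succ), g c₂.succ) :=
      congrArg Subtype.val h
    rw [Sym2.eq_iff] at h'
    have h1 := (hpr c₁.succ (Fin.succ_ne_zero c₁)).1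
    have h2 := (hpr c₂.succ (Fin.succ_ne_zero c₂)).1
    rcases h' with ⟨ha, hb⟩ | ⟨ha, hb⟩
    · exact Fin.succ_injective _ (g.injective hb)
    · have e1 : pr c₁.succ = c₂.succ := g.injective ha
      have e2 : c₁.succ = pr c₂.succ := g.injective hb
      rw [e1] at h1
      rw [← e2] at h2
      exact absurd (h1.trans h2) (lt_irrefl _)
  have hφbij : Function.Bijective φ := by
    rw [Nat.bijective_iff_injective_and_card]
    refine ⟨hφinj, ?_⟩
    rw [Nat.card_eq_fintype_card, Fintype.card_fin]
    exact hcardE.symm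
  set E := Equiv.ofBijective φ hφbij with hE
  refine ⟨f, E.symm, hfinj, hft, E.symm.bijective, ?_⟩
  intro e
  set c := E.symm e with hc
  have he : φ c = e := E.apply_symm_apply e
  have he' : (e : Sym2 VT) = s(g (pr c.succ), g c.succ) := by
    rw [← he]
  rw [he', Sym2.map_pair_eq, hfg, hfg, SimpleGraph.mem_edgeSet]
  have hadj := hFadj c.succ (by simp) (by
    have := c.isLt
    simp only [Fin.val_succ]
    omega)
  have hcol : (⟨((c.succ : ℕ)) - 1, by have := c.isLt; simp only [Fin.val_succ]; omega⟩ : Fin m)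
      = c := by
    apply Fin.ext
    simp only [Fin.val_succ]
    omega
  rwa [hcol] at hadj
end
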